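/- arXiv:2304.07641 — 7 statements merged into one kernel-verified Lean document; each statement's English description precedes it below -/
import Mathlib

section
/- Assume the filtration setup. If N is a finitely generated R-module, n ≥ 0 is an integer, 1 ≤ i ≤ t, Tor_n^R(M_i, N) = 0, and M_{i-1} is faithful as an R-module (its R-annihilator is zero), then the projective dimension of N over R is at most n. -/
set_option linter.unusedSectionVars false
set_option maxHeartbeats 1000000
open CategoryTheory CategoryTheory.Limits CategoryTheory.MonoidalCategory IsLocalRing TensorProduct


section MinCover
variable {R : Type} [CommRing R] [IsLocalRing R]


private lemma exists_fin_surj (K : Type) [AddCommGroup K] [Module R K] [Module.Finite R K] :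
    ∃ (r : ℕ) (π : (Fin r → R) →ₗ[R] K), Function.Surjective π := by
  obtain ⟨n, s, hs⟩ := Module.Finite.exists_fin (R := R) (M := K)
  refine ⟨n, Fintype.linearCombination R s, ?_⟩
  rw [← LinearMap.range_eq_top, Fintype.range_linearCombination, hs]

private lemma min_cover_aux {K : Type} [AddCommGroup K] [Module R K] {r : ℕ}
    (π : (Fin (r + 1) → R) →ₗ[R] K) (hπ : Function.Surjective π)
    (hmin : ∀ (π' : (Fin r → R) →ₗ[R] K), ¬ Function.Surjective π') :
    ∀ v ∈ LinearMap.ker π, ∀ j, v j ∈ maximalIdeal R := by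
  classical
  intro v hv j
  by_contra hvj
  have hu : IsUnit (v j) := by
    rw [IsLocalRing.mem_maximalIdeal, mem_nonunits_iff, not_not] at hvj
    exact hvj
  set x : Fin (r + 1) → K := fun i => π (Pi.single i 1) with hxdef
  have hπx : ∀ c : Fin (r + 1) → R, π c = ∑ i, c i • x i := by
    intro c
    conv_lhs => rw [← Finset.univ_sum_single c]
    rw [map_sum]
    refine Finset.sum_congr rfl fun i _ => ?_
    have h1 : (Pi.single i (c i) : Fin (r + 1) → R) = (c i • (Pi.single i (1 : R) : Fin (r + 1) → R) : Fin (r + 1) → R) := by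
      rw [← Pi.single_smul, smul_eq_mul, mul_one]
    rw [h1, map_smul]
  have hrel : ∑ i, v i • x i = 0 := by rw [← hπx]; exact LinearMap.mem_ker.mp hv
  set x' : Fin r → K := fun i => x (Fin.succAbove j i) with hx'def
  have hmem : ∀ i : Fin (r + 1), i ≠ j → x i ∈ Submodule.span R (Set.range x') := by
    intro i hij
    obtain ⟨i', hi'⟩ := Fin.exists_succAbove_eq hij
    exact Submodule.subset_span ⟨i', by simp only [hx'def, hi']⟩
  have hx'span : ∀ i : Fin (r + 1), x i ∈ Submodule.span R (Set.range x') := by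
    intro i
    rcases eq_or_ne i j with rfl | hij
    · have hsum : v i • x i = -∑ t ∈ Finset.univ.erase i, v t • x t := by
        have h2 := Finset.sum_erase_add Finset.univ (fun t => v t • x t) (Finset.mem_univ i)
        rw [← h2] at hrel
        linear_combination (norm := abel) hrel
      have hmem2 : v i • x i ∈ Submodule.span R (Set.range x') := by
        rw [hsum]
        exact Submodule.neg_mem _ (Submodule.sum_mem _ fun t ht =>
          Submodule.smul_mem _ _ (hmem t (Finset.ne_of_mem_erase ht)))
      obtain ⟨b, hb⟩ : ∃ b, b * v i = 1 := by
        obtain ⟨u, hu'⟩ := hu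
        exact ⟨(u⁻¹ : Rˣ), by rw [← hu']; simp⟩
      have h3 : x i = b • (v i • x i) := by rw [smul_smul, hb, one_smul]
      rw [h3]
      exact Submodule.smul_mem _ _ hmem2
    · exact hmem i hij
  refine hmin (Fintype.linearCombination R x') ?_
  rw [← LinearMap.range_eq_top, Fintype.range_linearCombination, eq_top_iff]
  intro y _
  obtain ⟨c, rfl⟩ := hπ y
  rw [hπx]
  exact Submodule.sum_mem _ fun i _ => Submodule.smul_mem _ _ (hx'span i)

lemma exists_min_cover (K : Type) [AddCommGroup K] [Module R K] [Module.Finite R K] :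
    ∃ (r : ℕ) (π : (Fin r → R) →ₗ[R] K), Function.Surjective π ∧
      ∀ x ∈ LinearMap.ker π, ∀ j, x j ∈ maximalIdeal R := by
  classical
  have hP : ∃ r, ∃ (π : (Fin r → R) →ₗ[R] K), Function.Surjective π :=
    exists_fin_surj (R := R) K
  have hmin := fun s (hs : s < Nat.find hP) => Nat.find_min hP hs
  obtain ⟨π, hπ⟩ := Nat.find_spec hP
  revert π hπ hmin
  generalize Nat.find hP = r
  intro hmin π hπ
  match r, π, hπ with
  | 0, π, hπ => exact ⟨0, π, hπ, fun x _ j => j.elim0⟩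
  | (r + 1), π, hπ =>
      refine ⟨r + 1, π, hπ, min_cover_aux π hπ ?_⟩
      intro π' hπ'
      exact (hmin r (Nat.lt_succ_self r)) ⟨π', hπ'⟩

end MinCover


section Res
variable {R : Type} [CommRing R] [IsLocalRing R] [IsNoetherianRing R]
variable {N : Type} [AddCommGroup N] [Module R N] [Module.Finite R N]

structure MinRes (R : Type) [CommRing R] [IsLocalRing R] (N : Type) [AddCommGroup N] [Module R N] where
  rank : ℕ → ℕ
  π₀ : (Fin (rank 0) → R) →ₗ[R] N
  d : ∀ j : ℕ, (Fin (rank (j + 1)) → R) →ₗ[R] (Fin (rank j) → R)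
  surj : Function.Surjective π₀
  ker0 : LinearMap.range (d 0) = LinearMap.ker π₀
  kerS : ∀ j, LinearMap.range (d (j + 1)) = LinearMap.ker (d j)
  min : ∀ j x k, d j x k ∈ maximalIdeal R
  min0 : ∀ x ∈ LinearMap.ker π₀, ∀ k, x k ∈ maximalIdeal R

namespace MinRes

variable (res : MinRes R N)

noncomputable def complex : ChainComplex (ModuleCat R) ℕ :=
  ChainComplex.of (fun j => ModuleCat.of R (Fin (res.rank j) → R))
    (fun j => ModuleCat.ofHom (res.d j))
    (fun j => by
      apply ModuleCat.hom_ext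
      apply LinearMap.ext
      intro x
      show res.d j (res.d (j + 1) x) = 0
      have : res.d (j + 1) x ∈ LinearMap.ker (res.d j) := by
        rw [← res.kerS j]; exact LinearMap.mem_range_self _ x
      exact this)

lemma complex_d (j : ℕ) : res.complex.d (j + 1) j = ModuleCat.ofHom (res.d j) := by
  simp [complex]

lemma complex_exactAt_succ (n : ℕ) : res.complex.ExactAt (n + 1) := by
  rw [HomologicalComplex.exactAt_iff' _ (n + 1 + 1) (n + 1) n (by simp) (by simp)]
  rw [ShortComplex.moduleCat_exact_iff]
  intro x₂ hx₂
  have hx₂' : x₂ ∈ LinearMap.ker (res.d n) := by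
    show res.d n x₂ = 0
    have := congrArg (fun f => f) hx₂
    simp [HomologicalComplex.sc', complex_d] at hx₂
    exact hx₂
  obtain ⟨x₁, hx₁⟩ := (res.kerS n).ge hx₂'
  refine ⟨x₁, ?_⟩
  show res.complex.d (n + 1 + 1) (n + 1) x₁ = x₂
  rw [complex_d]
  exact hx₁

noncomputable def projRes : ProjectiveResolution (ModuleCat.of R N) where
  complex := res.complex
  projective n := ModuleCat.projective_of_free (Pi.basisFun R (Fin (res.rank n)))
  π := (ChainComplex.toSingle₀Equiv _ _).symm ⟨ModuleCat.ofHom res.π₀, by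
    rw [complex_d]
    apply ModuleCat.hom_ext
    apply LinearMap.ext
    intro x
    show res.π₀ (res.d 0 x) = 0
    have : res.d 0 x ∈ LinearMap.ker res.π₀ := by
      rw [← res.ker0]; exact LinearMap.mem_range_self _ x
    exact this⟩
  quasiIso := ⟨fun n => by
    cases n with
    | zero =>
        rw [ChainComplex.quasiIsoAt₀_iff, ShortComplex.quasiIso_iff_of_zeros']
        · refine ⟨?_, ?_⟩
          · rw [ShortComplex.moduleCat_exact_iff]
            intro x₂ hx₂
            have hx₂' : x₂ ∈ LinearMap.ker res.π₀ := by
              exact hx₂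
            obtain ⟨x₁, hx₁⟩ := res.ker0.ge hx₂'
            exact ⟨x₁, hx₁⟩
          · rw [ModuleCat.epi_iff_surjective]
            intro y
            obtain ⟨x, hx⟩ := res.surj y
            exact ⟨x, hx⟩
        all_goals rfl
    | succ n =>
        rw [quasiIsoAt_iff_exactAt']
        · exact res.complex_exactAt_succ n
        · apply ChainComplex.exactAt_succ_single_obj⟩

end MinRes
end Res


section Resolution
variable (R : Type) [CommRing R] [IsLocalRing R] [IsNoetherianRing R]
variable (N : Type) [AddCommGroup N] [Module R N] [Module.Finite R N]


variable {R N}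

namespace MinResBuild

private def Cov (p : ℕ) (K : Submodule R (Fin p → R)) : Type :=
  { d : Σ q : ℕ, (Fin q → R) →ₗ[R] (Fin p → R) //
      LinearMap.range d.2 = K ∧ ∀ x ∈ LinearMap.ker d.2, ∀ j, x j ∈ maximalIdeal R }

private lemma cov_nonempty (p : ℕ) (K : Submodule R (Fin p → R)) : Nonempty (Cov p K) := by
  haveI : Module.Finite R ↥K := Module.Finite.iff_fg.mpr (IsNoetherian.noetherian K)
  obtain ⟨r, π, hsurj, hker⟩ := exists_min_cover (R := R) (↥K)
  refine ⟨⟨⟨r, K.subtype.comp π⟩, ?_, ?_⟩⟩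
  · rw [LinearMap.range_comp, LinearMap.range_eq_top.mpr hsurj, Submodule.map_top,
      Submodule.range_subtype]
  · intro x hx j
    refine hker x ?_ j
    rw [LinearMap.mem_ker]
    have h2 : K.subtype (π x) = 0 := hx
    exact Subtype.ext (by simpa using h2)

private def Cov0 : Type :=
  { d : Σ r : ℕ, (Fin r → R) →ₗ[R] N // Function.Surjective d.2 ∧
      ∀ x ∈ LinearMap.ker d.2, ∀ j, x j ∈ maximalIdeal R }

private lemma cov0_nonempty : Nonempty (Cov0 (R := R) (N := N)) := by
  obtain ⟨r, π, hsurj, hker⟩ := exists_min_cover (R := R) N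
  exact ⟨⟨⟨r, π⟩, hsurj, hker⟩⟩

private noncomputable def cov (p : ℕ) (K : Submodule R (Fin p → R)) : Cov p K :=
  (cov_nonempty p K).some

private noncomputable def cov0 : Cov0 (R := R) (N := N) := (cov0_nonempty (R := R) (N := N)).some

private noncomputable def st : ℕ → Σ p : ℕ, Submodule R (Fin p → R)
  | 0 => ⟨(cov0 (R := R) (N := N)).1.1, LinearMap.ker (cov0 (R := R) (N := N)).1.2⟩
  | j + 1 => ⟨(cov (st j).1 (st j).2).1.1, LinearMap.ker (cov (st j).1 (st j).2).1.2⟩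

private noncomputable def dd (j : ℕ) :
    (Fin (st (R := R) (N := N) (j + 1)).1 → R) →ₗ[R] (Fin (st (R := R) (N := N) j).1 → R) :=
  (cov (st j).1 (st j).2).1.2

private lemma dd_range (j : ℕ) :
    LinearMap.range (dd (R := R) (N := N) j) = (st (R := R) (N := N) j).2 :=
  (cov (st j).1 (st j).2).2.1

private lemma dd_ker (j : ℕ) :
    LinearMap.ker (dd (R := R) (N := N) j) = (st (R := R) (N := N) (j + 1)).2 := rfl

private lemma dd_ker_min (j : ℕ) :
    ∀ x ∈ LinearMap.ker (dd (R := R) (N := N) j), ∀ k, x k ∈ maximalIdeal R :=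
  (cov (st j).1 (st j).2).2.2

end MinResBuild

open MinResBuild in
noncomputable def minRes : MinRes R N where
  rank j := (st (R := R) (N := N) j).1
  π₀ := (cov0 (R := R) (N := N)).1.2
  d := dd
  surj := (cov0 (R := R) (N := N)).2.1
  ker0 := dd_range 0
  kerS j := by rw [dd_range (j + 1), ← dd_ker j]
  min j x k := by
    have hx : dd (R := R) (N := N) j x ∈ (st (R := R) (N := N) j).2 :=
      dd_range (R := R) (N := N) j ▸ LinearMap.mem_range_self _ x
    cases j with
    | zero => exact (cov0 (R := R) (N := N)).2.2 _ hx k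
    | succ j' => exact dd_ker_min j' _ hx k
  min0 := (cov0 (R := R) (N := N)).2.2

end Resolution


section Core
variable {R : Type} [CommRing R] [IsNoetherianRing R] [IsLocalRing R]
    {S : Type} [CommRing S] [IsNoetherianRing S] [Algebra R S]
    {M : Type} [AddCommGroup M] [Module R M] [Module S M] [IsScalarTower R S M]
    [Module.Finite S M]
    (A W : Submodule S M)

/-- inclusion of `A` into `W` as `R`-modules -/
def incl (hAW : A ≤ W) : ↥A →ₗ[R] ↥W where
  toFun a := ⟨a.1, hAW a.2⟩
  map_add' _ _ := rfl
  map_smul' _ _ := rfl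

lemma incl_injective (hAW : A ≤ W) : Function.Injective (incl (R := R) A W hAW) := by
  intro a b h
  apply Subtype.ext
  exact congrArg (fun x : ↥W => x.1) h

theorem core_lemma
    (hAW : A ≤ W)
    (hmWA : ∀ r ∈ maximalIdeal R, ∀ w ∈ W, r • w ∈ A)
    (hAJW : A ≤ (⊥ : Ideal S).jacobson • W)
    (hfaith : ∀ r : R, (∀ x : ↥W, r • x = 0) → r = 0)
    {p q p' : ℕ}
    (d₂ : (Fin q → R) →ₗ[R] (Fin p → R)) (d₁ : (Fin p → R) →ₗ[R] (Fin p' → R))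
    (hd : d₁.comp d₂ = 0)
    (hmin : ∀ x k, d₂ x k ∈ maximalIdeal R)
    (hex : ∀ a : ↥A ⊗[R] (Fin p → R), LinearMap.lTensor ↥A d₁ a = 0 →
      a ∈ LinearMap.range (LinearMap.lTensor ↥A d₂)) :
    d₂ = 0 := by
  classical
  set ι := incl (R := R) A W hAW with hι
  have hιinj : Function.Injective ι := incl_injective A W hAW
  haveI : Module.Finite S ↥W := by
    haveI : IsNoetherian S M := isNoetherian_of_isNoetherianRing_of_finite S M
    exact Module.Finite.iff_fg.mpr (IsNoetherian.noetherian W)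
  -- step 1 : image of lTensor W d₂ is contained in range of rTensor ι
  have step1 : ∀ z : ↥W ⊗[R] (Fin q → R),
      (LinearMap.lTensor ↥W d₂) z ∈ LinearMap.range (LinearMap.rTensor (Fin p → R) ι) := by
    intro z
    induction z using TensorProduct.induction_on with
    | zero => simp
    | add u v hu hv => rw [map_add]; exact Submodule.add_mem _ hu hv
    | tmul w f =>
        rw [LinearMap.lTensor_tmul]
        have hcoord : ∀ v : Fin p → R, (∀ k, v k ∈ maximalIdeal R) →
            w ⊗ₜ[R] v ∈ LinearMap.range (LinearMap.rTensor (Fin p → R) ι) := by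
          intro v hv
          have hv' : v = ∑ k, Pi.single k (v k) := (Finset.univ_sum_single v).symm
          rw [hv', tmul_sum]
          refine Submodule.sum_mem _ fun k _ => ?_
          have h1 : (Pi.single k (v k) : Fin p → R)
              = (v k • (Pi.single k (1 : R) : Fin p → R) : Fin p → R) := by
            rw [← Pi.single_smul, smul_eq_mul, mul_one]
          set a : ↥A := ⟨v k • (w : M), hmWA (v k) (hv k) w.1 w.2⟩ with hadef
          refine ⟨a ⊗ₜ[R] (Pi.single k (1 : R) : Fin p → R), ?_⟩
          rw [LinearMap.rTensor_tmul]
          have hιa : ι a = v k • w := by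
            apply Subtype.ext
            simp [hadef, hι, incl]
          rw [hιa, smul_tmul, ← h1]
        exact hcoord (d₂ f) (hmin f)
  -- S-linear version of lTensor W d₂
  set Φ : ↥W ⊗[R] (Fin q → R) →ₗ[S] ↥W ⊗[R] (Fin p → R) :=
    TensorProduct.AlgebraTensorModule.map (LinearMap.id : ↥W →ₗ[S] ↥W) d₂ with hΦ
  have hΦeq : ∀ z, Φ z = LinearMap.lTensor ↥W d₂ z := by
    intro z
    induction z using TensorProduct.induction_on with
    | zero => simp
    | add u v hu hv => rw [map_add, map_add, hu, hv]
    | tmul w f => simp [hΦ]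
  -- range of rTensor ι at level F₂ is inside Jac • ⊤
  have step2 : ∀ b : ↥A ⊗[R] (Fin q → R),
      LinearMap.rTensor (Fin q → R) ι b ∈
        ((⊥ : Ideal S).jacobson • ⊤ : Submodule S (↥W ⊗[R] (Fin q → R))) := by
    intro b
    induction b using TensorProduct.induction_on with
    | zero => simp
    | add u v hu hv => rw [map_add]; exact Submodule.add_mem _ hu hv
    | tmul a f =>
        rw [LinearMap.rTensor_tmul]
        have key : ∀ (x : M) (hx : x ∈ (⊥ : Ideal S).jacobson • W),
            (⟨x, Submodule.smul_le_right hx⟩ : ↥W) ⊗ₜ[R] f ∈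
              ((⊥ : Ideal S).jacobson • ⊤ : Submodule S (↥W ⊗[R] (Fin q → R))) := by
          intro x hx
          induction hx using Submodule.smul_induction_on' with
          | smul s hs m' hm' =>
              have h2 : (⟨s • m', Submodule.smul_le_right (Submodule.smul_mem_smul hs hm')⟩ : ↥W)
                  = s • (⟨m', hm'⟩ : ↥W) := rfl
              rw [h2, ← smul_tmul']
              exact Submodule.smul_mem_smul hs Submodule.mem_top
          | add x hx y hy hx' hy' =>
              have h2 : (⟨x + y, Submodule.smul_le_right (Submodule.add_mem _ hx hy)⟩ : ↥W)
                  ⊗ₜ[R] f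
                  = (⟨x, Submodule.smul_le_right hx⟩ : ↥W) ⊗ₜ[R] f
                    + (⟨y, Submodule.smul_le_right hy⟩ : ↥W) ⊗ₜ[R] f := by
                rw [← add_tmul]
                rfl
              rw [h2]
              exact Submodule.add_mem _ hx' hy'
        have ha : ι a = ⟨a.1, Submodule.smul_le_right (hAJW a.2)⟩ := rfl
        rw [ha]
        exact key a.1 (hAJW a.2)
  -- the kernel of Φ is everything, by Nakayama
  have hker : LinearMap.ker Φ = ⊤ := by
    have htop : (⊤ : Submodule S (↥W ⊗[R] (Fin q → R))) ≤
        LinearMap.ker Φ ⊔ (⊥ : Ideal S).jacobson • ⊤ := by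
      intro w _
      obtain ⟨a, hax⟩ := step1 w
      -- a is a cycle
      have hcyc : LinearMap.lTensor ↥A d₁ a = 0 := by
        apply Module.Flat.rTensor_preserves_injective_linearMap (M := (Fin p' → R)) ι hιinj
        rw [map_zero]
        have hcomm : (LinearMap.rTensor (Fin p' → R) ι).comp (LinearMap.lTensor ↥A d₁)
            = (LinearMap.lTensor ↥W d₁).comp (LinearMap.rTensor (Fin p → R) ι) := by
          rw [LinearMap.rTensor_comp_lTensor, LinearMap.lTensor_comp_rTensor]
        have h2 := LinearMap.congr_fun hcomm a
        simp only [LinearMap.coe_comp, Function.comp_apply] at h2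
        rw [h2, hax]
        have h3 : (LinearMap.lTensor ↥W d₁).comp (LinearMap.lTensor ↥W d₂)
            = LinearMap.lTensor ↥W (d₁.comp d₂) := (LinearMap.lTensor_comp _ _ _).symm
        have h4 := LinearMap.congr_fun h3 w
        simp only [LinearMap.coe_comp, Function.comp_apply] at h4
        rw [h4, hd]
        simp
      obtain ⟨b, hb⟩ := hex a hcyc
      refine Submodule.mem_sup.mpr ⟨w - LinearMap.rTensor (Fin q → R) ι b, ?_,
        LinearMap.rTensor (Fin q → R) ι b, step2 b, by abel⟩
      rw [LinearMap.mem_ker, map_sub, hΦeq, hΦeq]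
      have hcomm2 : (LinearMap.lTensor ↥W d₂).comp (LinearMap.rTensor (Fin q → R) ι)
          = (LinearMap.rTensor (Fin p → R) ι).comp (LinearMap.lTensor ↥A d₂) := by
        rw [LinearMap.lTensor_comp_rTensor, LinearMap.rTensor_comp_lTensor]
      have h5 := LinearMap.congr_fun hcomm2 b
      simp only [LinearMap.coe_comp, Function.comp_apply] at h5
      rw [h5, hb, hax, sub_self]
    -- Nakayama over S
    haveI : Module.Finite S (↥W ⊗[R] (Fin q → R)) :=
      Module.Finite.equiv (TensorProduct.piScalarRight R S ↥W (Fin q)).symm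
    haveI : Module.Finite S ((↥W ⊗[R] (Fin q → R)) ⧸ LinearMap.ker Φ) :=
      Module.Finite.of_surjective (Submodule.mkQ _) (Submodule.mkQ_surjective _)
    have hq : (⊤ : Submodule S ((↥W ⊗[R] (Fin q → R)) ⧸ LinearMap.ker Φ)) ≤
        (⊥ : Ideal S).jacobson • ⊤ := by
      intro z _
      obtain ⟨w, rfl⟩ := Submodule.Quotient.mk_surjective _ z
      obtain ⟨u, hu, v, hv, huv⟩ := Submodule.mem_sup.mp (htop (Submodule.mem_top (x := w)))
      have h6 : (Submodule.Quotient.mk w : (↥W ⊗[R] (Fin q → R)) ⧸ LinearMap.ker Φ)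
          = Submodule.Quotient.mk v := by
        rw [← huv, Submodule.Quotient.mk_add, (Submodule.Quotient.mk_eq_zero _).mpr hu, zero_add]
      rw [h6]
      have h7 := Submodule.mem_map_of_mem (f := (LinearMap.ker Φ).mkQ) hv
      rw [Submodule.map_smul''] at h7
      have h8 : (⊥ : Ideal S).jacobson • Submodule.map (LinearMap.ker Φ).mkQ ⊤
          ≤ (⊥ : Ideal S).jacobson • ⊤ := Submodule.smul_mono le_rfl le_top
      exact h8 h7
    have hbot := Submodule.eq_bot_of_le_smul_of_le_jacobson_bot ((⊥ : Ideal S).jacobson) ⊤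
      Module.Finite.fg_top hq le_rfl
    rw [eq_top_iff]
    intro w _
    have h8 : (Submodule.Quotient.mk w : (↥W ⊗[R] (Fin q → R)) ⧸ LinearMap.ker Φ)
        ∈ (⊥ : Submodule S _) := hbot ▸ Submodule.mem_top
    simpa [Submodule.Quotient.mk_eq_zero] using h8
  -- extract coordinates : d₂ = 0
  apply LinearMap.ext
  intro f
  funext k
  refine hfaith (d₂ f k) fun w => ?_
  have h9 : LinearMap.lTensor ↥W d₂ (w ⊗ₜ[R] f) = 0 := by
    rw [← hΦeq]
    have : (w ⊗ₜ[R] f : ↥W ⊗[R] (Fin q → R)) ∈ LinearMap.ker Φ := hker ▸ Submodule.mem_top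
    exact this
  rw [LinearMap.lTensor_tmul] at h9
  -- apply coordinate projection
  have h10 := congrArg (TensorProduct.rid R ↥W ∘ (LinearMap.lTensor ↥W (LinearMap.proj k))) h9
  simp only [Function.comp_apply, LinearMap.lTensor_tmul, map_zero] at h10
  rw [LinearMap.proj_apply] at h10
  simpa using h10
end Core

section Bridges
variable {R : Type} [CommRing R] [IsLocalRing R] [IsNoetherianRing R]
variable {N : Type} [AddCommGroup N] [Module R N] [Module.Finite R N]

namespace MinRes
variable (res : MinRes R N)

lemma projRes_complex : (res.projRes).complex = res.complex := rfl

section TorBridge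
variable (A : Type) [AddCommGroup A] [Module R A]

lemma mapped_d (j : ℕ) :
    ((((tensoringLeft (ModuleCat R)).obj (ModuleCat.of R A)).mapHomologicalComplex
        (ComplexShape.down ℕ)).obj res.complex).d (j + 1) j
      = ModuleCat.ofHom (LinearMap.lTensor A (res.d j)) := by
  rw [Functor.mapHomologicalComplex_obj_d, complex_d]
  rfl

lemma mapped_exactAt (n : ℕ)
    (hvan : Subsingleton
      (((Tor (ModuleCat R) n).obj (ModuleCat.of R A)).obj (ModuleCat.of R N))) :
    ((((tensoringLeft (ModuleCat R)).obj (ModuleCat.of R A)).mapHomologicalComplex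
        (ComplexShape.down ℕ)).obj res.complex).ExactAt n := by
  set F := (tensoringLeft (ModuleCat R)).obj (ModuleCat.of R A) with hF
  have h1 : IsZero (((Tor (ModuleCat R) n).obj (ModuleCat.of R A)).obj (ModuleCat.of R N)) :=
    @ModuleCat.isZero_of_subsingleton _ _ _ hvan
  have h2 : IsZero ((F.leftDerived n).obj (ModuleCat.of R N)) := h1
  have e := (res.projRes).isoLeftDerivedObj F n
  have h3 : IsZero (((F.mapHomologicalComplex _).obj (res.projRes).complex).homology n) :=
    IsZero.of_iso h2 e.symm
  rw [HomologicalComplex.exactAt_iff_isZero_homology]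
  exact res.projRes_complex ▸ h3

lemma tor_exact_succ (m : ℕ)
    (hvan : Subsingleton
      (((Tor (ModuleCat R) (m + 1)).obj (ModuleCat.of R A)).obj (ModuleCat.of R N))) :
    ∀ a : A ⊗[R] (Fin (res.rank (m + 1)) → R),
      LinearMap.lTensor A (res.d m) a = 0 →
      a ∈ LinearMap.range (LinearMap.lTensor A (res.d (m + 1))) := by
  intro a ha
  have h4 := res.mapped_exactAt A (m + 1) hvan
  rw [HomologicalComplex.exactAt_iff' _ (m + 1 + 1) (m + 1) m (by simp) (by simp),
    ShortComplex.moduleCat_exact_iff] at h4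
  have h5 := h4 a (by
    show (((((tensoringLeft (ModuleCat R)).obj (ModuleCat.of R A)).mapHomologicalComplex
        (ComplexShape.down ℕ)).obj res.complex).d (m + 1) m) a = 0
    rw [mapped_d]
    exact ha)
  obtain ⟨x₁, hx₁⟩ := h5
  refine ⟨x₁, ?_⟩
  have h6 : (((((tensoringLeft (ModuleCat R)).obj (ModuleCat.of R A)).mapHomologicalComplex
      (ComplexShape.down ℕ)).obj res.complex).d (m + 1 + 1) (m + 1)) x₁ = a := hx₁
  rwa [mapped_d] at h6

lemma tor_surj_zero
    (hvan : Subsingleton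
      (((Tor (ModuleCat R) 0).obj (ModuleCat.of R A)).obj (ModuleCat.of R N))) :
    ∀ a : A ⊗[R] (Fin (res.rank 0) → R),
      a ∈ LinearMap.range (LinearMap.lTensor A (res.d 0)) := by
  intro a
  have h4 := res.mapped_exactAt A 0 hvan
  rw [HomologicalComplex.exactAt_iff' _ 1 0 0 (by simp) (by simp),
    ShortComplex.moduleCat_exact_iff] at h4
  have h5 := h4 a (by
    have hz : ((((tensoringLeft (ModuleCat R)).obj (ModuleCat.of R A)).mapHomologicalComplex
        (ComplexShape.down ℕ)).obj res.complex).d 0 0 = 0 := by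
      apply HomologicalComplex.shape
      simp
    show (((((tensoringLeft (ModuleCat R)).obj (ModuleCat.of R A)).mapHomologicalComplex
        (ComplexShape.down ℕ)).obj res.complex).d 0 0) a = 0
    rw [hz]
    rfl)
  obtain ⟨x₁, hx₁⟩ := h5
  refine ⟨x₁, ?_⟩
  have h6 : (((((tensoringLeft (ModuleCat R)).obj (ModuleCat.of R A)).mapHomologicalComplex
      (ComplexShape.down ℕ)).obj res.complex).d 1 0) x₁ = a := hx₁
  rwa [mapped_d] at h6

end TorBridge

lemma ext_vanish (n : ℕ) (hdzero : res.d n = 0) (L : ModuleCat.{0} R) :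
    Subsingleton
      (((Ext R (ModuleCat.{0} R) (n + 1)).obj (Opposite.op (ModuleCat.of R N))).obj L) := by
  have hsurj : Function.Surjective (res.d (n + 1)) := by
    rw [← LinearMap.range_eq_top, res.kerS n, hdzero]
    exact LinearMap.ker_zero
  have h3 : (res.complex.linearYonedaObj R L).ExactAt (n + 1) := by
    rw [HomologicalComplex.exactAt_iff' _ n (n + 1) (n + 2) (by simp) (by simp),
      ShortComplex.moduleCat_exact_iff]
    intro x₂ hx₂
    refine ⟨0, ?_⟩
    rw [map_zero]
    -- show 0 = x₂, i.e. x₂ = 0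
    have hx₂' : (res.complex.linearYonedaObj R L).d (n + 1) (n + 2) x₂ = 0 := hx₂
    rw [ChainComplex.linearYonedaObj_d] at hx₂'
    -- hx₂' : res.complex.d (n+2) (n+1) ≫ x₂ = 0
    symm
    apply ModuleCat.hom_ext
    apply LinearMap.ext
    intro y
    obtain ⟨x, rfl⟩ := hsurj y
    have h7 : res.complex.d (n + 2) (n + 1) ≫ (x₂ : res.complex.X (n + 1) ⟶ L) = 0 := hx₂'
    have h8 := congrArg (fun (f : res.complex.X (n + 2) ⟶ L) => f x) h7
    rw [complex_d] at h8
    exact h8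
  have h4 : IsZero ((res.complex.linearYonedaObj R L).homology (n + 1)) := by
    rw [← HomologicalComplex.exactAt_iff_isZero_homology]
    exact h3
  have e := ProjectiveResolution.isoExt (R := R) (res.projRes) (n + 1) L
  have h5 : IsZero (((Ext R (ModuleCat.{0} R) (n + 1)).obj
      (Opposite.op (ModuleCat.of R N))).obj L) :=
    IsZero.of_iso (res.projRes_complex ▸ h4) e
  set E := ((Ext R (ModuleCat.{0} R) (n + 1)).obj (Opposite.op (ModuleCat.of R N))).obj L with hE
  have hid : (𝟙 E : E ⟶ E) = 0 := h5.eq_zero_of_src _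
  constructor
  intro x y
  have h9 : ∀ z : E, z = 0 := by
    intro z
    calc z = (𝟙 E : E ⟶ E) z := (ModuleCat.id_apply _ _).symm
      _ = 0 := by rw [hid]; rfl
  rw [h9 x, h9 y]

end MinRes
end Bridges

section Main

/-- `N` has projective dimension at most `n` over `R`:
`Ext^{n+1}_R(N, L)` vanishes for every `R`-module `L`. -/
def HasPdLE (R : Type) [CommRing R] (N : Type) [AddCommGroup N] [Module R N] (n : ℕ) : Prop :=
  ∀ L : ModuleCat.{0} R,
    Subsingleton (((Ext R (ModuleCat.{0} R) (n + 1)).obj (Opposite.op (ModuleCat.of R N))).obj L)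

theorem pd_le_of_tor_vanishing_faithful
    (R : Type) [CommRing R] [IsNoetherianRing R] [IsLocalRing R]
    (S : Type) [CommRing S] [IsNoetherianRing S] [Algebra R S]
    (hmS : (maximalIdeal R).map (algebraMap R S) ≤ (⊥ : Ideal S).jacobson)
    (M : Type) [AddCommGroup M] [Module R M] [Module S M] [IsScalarTower R S M]
    [Nontrivial M] [Module.Finite S M]
    (t : ℕ) (ht : 1 ≤ t)
    (Mfil : ℕ → Submodule S M)
    (hM0 : Mfil 0 = ⊤)
    (hlow : ∀ i, 1 ≤ i → i ≤ t →
      maximalIdeal R • (Mfil (i - 1)).restrictScalars R ≤ (Mfil i).restrictScalars R)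
    (hhigh : ∀ i, 1 ≤ i → i ≤ t → Mfil i ≤ (⊥ : Ideal S).jacobson • Mfil (i - 1))
    (N : Type) [AddCommGroup N] [Module R N] [Module.Finite R N]
    (n : ℕ) (i : ℕ) (hi1 : 1 ≤ i) (hit : i ≤ t)
    (hvanish : Subsingleton
      (((Tor (ModuleCat R) n).obj (ModuleCat.of R ↥(Mfil i))).obj (ModuleCat.of R N)))
    (hfaithful : ∀ r : R, (∀ x : ↥(Mfil (i - 1)), r • x = 0) → r = 0) :
    HasPdLE R N n := by
  intro L
  set res := minRes (R := R) (N := N) with hres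
  have hAW : Mfil i ≤ Mfil (i - 1) :=
    le_trans (hhigh i hi1 hit) Submodule.smul_le_right
  have hmWA : ∀ r ∈ maximalIdeal R, ∀ w ∈ Mfil (i - 1), r • w ∈ Mfil i := by
    intro r hr w hw
    have h1 : r • w ∈ maximalIdeal R • (Mfil (i - 1)).restrictScalars R :=
      Submodule.smul_mem_smul hr hw
    exact hlow i hi1 hit h1
  have hdzero : res.d n = 0 := by
    cases n with
    | zero =>
        refine core_lemma (Mfil i) (Mfil (i - 1)) hAW hmWA (hhigh i hi1 hit) hfaithful
          (p' := 0)
          (res.d 0) 0 (LinearMap.zero_comp _) (res.min 0) ?_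
        intro a _
        exact res.tor_surj_zero ↥(Mfil i) hvanish a
    | succ m =>
        refine core_lemma (Mfil i) (Mfil (i - 1)) hAW hmWA (hhigh i hi1 hit) hfaithful
          (res.d (m + 1)) (res.d m) ?_ (res.min (m + 1)) ?_
        · apply LinearMap.ext
          intro x
          show res.d m (res.d (m + 1) x) = 0
          have : res.d (m + 1) x ∈ LinearMap.ker (res.d m) := by
            rw [← res.kerS m]
            exact LinearMap.mem_range_self _ x
          exact this
        · intro a ha
          exact res.tor_exact_succ ↥(Mfil i) m hvanish a ha
  exact res.ext_vanish n hdzero L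

end Main
end

section
/- Assume the filtration setup and that some element of m is a non-zero-divisor on M. If N is a finitely generated R-module, n ≥ 0 is an integer, and 1 ≤ i ≤ t is such that Ext^n_R(N, M_i) = 0, then Ext^n_R(N, M_{i-1}) = 0. -/
open CategoryTheory IsLocalRing

open Limits

namespace ExtVanishAux

section MinCover

variable {R : Type} [CommRing R] [IsLocalRing R]

lemma mem_smul_top_pi {b : ℕ} (I : Ideal R) (x : Fin b → R) :
    x ∈ (I • ⊤ : Submodule R (Fin b → R)) ↔ ∀ c, x c ∈ I := by
  constructor
  · intro hx
    refine Submodule.smul_induction_on hx (fun r hr y _ => ?_) (fun y z hy hz c => ?_)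
    · intro c
      have h : (r • y) c = r * y c := rfl
      rw [h]
      exact I.mul_mem_right _ hr
    · have h : (y + z) c = y c + z c := rfl
      rw [h]
      exact I.add_mem (hy c) (hz c)
  · intro h
    have hx : x = ∑ c : Fin b, (x c) • (Pi.single c (1 : R) : Fin b → R) := by
      funext j
      rw [Finset.sum_apply]
      simp [Pi.single_apply]
    rw [hx]
    exact Submodule.sum_mem _ fun c _ =>
      Submodule.smul_mem_smul (h c) Submodule.mem_top

lemma exists_min_cover (A : Type) [AddCommGroup A] [Module R A] [Module.Finite R A] :
    ∃ (b : ℕ) (π : (Fin b → R) →ₗ[R] A), Function.Surjective π ∧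
      LinearMap.ker π ≤ (maximalIdeal R) • (⊤ : Submodule R (Fin b → R)) := by
  classical
  obtain ⟨n, s, hs⟩ := Module.Finite.exists_fin (R := R) (M := A)
  have hmain : ∀ b : ℕ, ∀ π : (Fin b → R) →ₗ[R] A, Function.Surjective π →
      ∃ (b' : ℕ) (π' : (Fin b' → R) →ₗ[R] A), Function.Surjective π' ∧
        LinearMap.ker π' ≤ (maximalIdeal R) • (⊤ : Submodule R (Fin b' → R)) := by
    intro b
    induction b using Nat.strong_induction_on with
    | _ b IH =>
      intro π hπ
      by_cases hker : LinearMap.ker π ≤ (maximalIdeal R) • (⊤ : Submodule R (Fin b → R))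
      · exact ⟨b, π, hπ, hker⟩
      · obtain ⟨v, hv, hvm⟩ := SetLike.not_le_iff_exists.1 hker
        rw [mem_smul_top_pi] at hvm
        push_neg at hvm
        obtain ⟨c, hc⟩ := hvm
        have hu : IsUnit (v c) := by
          by_contra hnu
          exact hc (IsLocalRing.mem_maximalIdeal (v c) |>.2 hnu)
        rcases b with _ | b₀
        · exact c.elim0
        set sg : Fin (b₀ + 1) → A := fun i => π (fun j => if i = j then 1 else 0) with hsg
        have hgen : ∀ a : A, a ∈ Submodule.span R (Set.range sg) := by
          intro a
          obtain ⟨x, rfl⟩ := hπ a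
          rw [LinearMap.pi_apply_eq_sum_univ π x]
          exact Submodule.sum_mem _ fun i _ =>
            Submodule.smul_mem _ _ (Submodule.subset_span ⟨i, rfl⟩)
        have hrel : ∑ i : Fin (b₀ + 1), v i • sg i = 0 := by
          have h := LinearMap.pi_apply_eq_sum_univ π v
          rw [LinearMap.mem_ker.1 hv] at h
          exact h.symm
        set t : Fin b₀ → A := fun k => sg (c.succAbove k) with ht
        have htr : Set.range t = sg '' ({c}ᶜ) := by
          have : Set.range t = Set.range (sg ∘ c.succAbove) := rfl
          rw [this, Set.range_comp, Fin.range_succAbove]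
        have hsgc : sg c ∈ Submodule.span R (Set.range t) := by
          obtain ⟨u, hu'⟩ := hu
          have h3 : v c • sg c + ∑ j ∈ Finset.univ.erase c, v j • sg j = 0 := by
            rw [Finset.add_sum_erase Finset.univ (fun j => v j • sg j) (Finset.mem_univ c)]
            exact hrel
          have h4 : v c • sg c = - ∑ j ∈ Finset.univ.erase c, v j • sg j :=
            eq_neg_of_add_eq_zero_left h3
          have h5 : sg c = (↑u⁻¹ : R) • (v c • sg c) := by
            rw [smul_smul]
            rw [← hu']
            simp
          rw [h5, h4]
          refine Submodule.smul_mem _ _ (Submodule.neg_mem _ (Submodule.sum_mem _ ?_))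
          intro j hj
          have hjc : j ≠ c := Finset.ne_of_mem_erase hj
          refine Submodule.smul_mem _ _ (Submodule.subset_span ?_)
          rw [htr]
          exact ⟨j, hjc, rfl⟩
        have hspan : ∀ a : A, a ∈ Submodule.span R (Set.range t) := by
          intro a
          refine Submodule.span_le.2 ?_ (hgen a)
          rintro x ⟨i, rfl⟩
          by_cases hic : i = c
          · subst hic; exact hsgc
          · exact Submodule.subset_span (by rw [htr]; exact ⟨i, hic, rfl⟩)
        have hsurj : Function.Surjective (Fintype.linearCombination R t) := by
          intro a
          obtain ⟨f, hf⟩ := (Submodule.mem_span_range_iff_exists_fun R).1 (hspan a)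
          exact ⟨f, by rw [Fintype.linearCombination_apply]; exact hf⟩
        exact IH b₀ (Nat.lt_succ_self b₀) _ hsurj
  exact hmain n (Fintype.linearCombination R s)
    (by
      intro a
      have ha : a ∈ Submodule.span R (Set.range s) := by rw [hs]; trivial
      obtain ⟨f, hf⟩ := (Submodule.mem_span_range_iff_exists_fun R).1 ha
      exact ⟨f, by rw [Fintype.linearCombination_apply]; exact hf⟩)

end MinCover
section Resolution

variable (R : Type) [CommRing R] [IsLocalRing R] [IsNoetherianRing R]

local instance finSub {M' : Type} [AddCommGroup M'] [Module R M'] [IsNoetherian R M']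
    (p : Submodule R M') : Module.Finite R ↥p :=
  Module.Finite.iff_fg.2 (IsNoetherian.noetherian p)

noncomputable def mcB (A : Type) [AddCommGroup A] [Module R A] [Module.Finite R A] : ℕ :=
  (exists_min_cover (R := R) A).choose

noncomputable def mcπ (A : Type) [AddCommGroup A] [Module R A] [Module.Finite R A] :
    (Fin (mcB R A) → R) →ₗ[R] A :=
  (exists_min_cover (R := R) A).choose_spec.choose

lemma mcπ_surj (A : Type) [AddCommGroup A] [Module R A] [Module.Finite R A] :
    Function.Surjective (mcπ R A) :=
  (exists_min_cover (R := R) A).choose_spec.choose_spec.1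

lemma mcπ_ker (A : Type) [AddCommGroup A] [Module R A] [Module.Finite R A] :
    LinearMap.ker (mcπ R A) ≤ (maximalIdeal R) • ⊤ :=
  (exists_min_cover (R := R) A).choose_spec.choose_spec.2

variable (N : Type) [AddCommGroup N] [Module R N] [Module.Finite R N]

noncomputable def Kseq : ℕ → (b : ℕ) × Submodule R (Fin b → R)
  | 0 => ⟨mcB R N, LinearMap.ker (mcπ R N)⟩
  | (j+1) => ⟨mcB R ↥(Kseq j).2, LinearMap.ker (mcπ R ↥(Kseq j).2)⟩

/-- number of generators at level j -/
noncomputable def bb (j : ℕ) : ℕ := (Kseq R N j).1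

/-- free module at level j -/
abbrev FM (j : ℕ) : Type := Fin (bb R N j) → R

/-- differential -/
noncomputable def δ (j : ℕ) : FM R N (j+1) →ₗ[R] FM R N j :=
  (Kseq R N j).2.subtype ∘ₗ (mcπ R ↥(Kseq R N j).2)

lemma δ_range (j : ℕ) : LinearMap.range (δ R N j) = (Kseq R N j).2 := by
  ext x
  constructor
  · rintro ⟨y, rfl⟩
    exact (mcπ R ↥(Kseq R N j).2 y).2
  · intro hx
    obtain ⟨y, hy⟩ := mcπ_surj R ↥(Kseq R N j).2 ⟨x, hx⟩
    exact ⟨y, congrArg Subtype.val hy⟩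

lemma δ_ker (j : ℕ) : LinearMap.ker (δ R N j) = (Kseq R N (j+1)).2 := by
  ext x
  rw [LinearMap.mem_ker]
  show ((mcπ R ↥(Kseq R N j).2 x : ↥(Kseq R N j).2) : Fin (Kseq R N j).1 → R) = 0 ↔
    x ∈ LinearMap.ker (mcπ R ↥(Kseq R N j).2)
  exact Submodule.coe_eq_zero

lemma Kseq_le (j : ℕ) : (Kseq R N j).2 ≤ (maximalIdeal R) • (⊤ : Submodule R (FM R N j)) := by
  cases j with
  | zero => exact mcπ_ker R N
  | succ j => exact mcπ_ker R ↥(Kseq R N j).2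

lemma δ_comp (j : ℕ) : (δ R N j) ∘ₗ (δ R N (j+1)) = 0 := by
  apply LinearMap.ext
  intro x
  have h1 : δ R N (j+1) x ∈ LinearMap.ker (δ R N j) := by
    rw [δ_ker]
    have h2 : δ R N (j+1) x ∈ LinearMap.range (δ R N (j+1)) := ⟨x, rfl⟩
    rwa [δ_range] at h2
  simpa using h1

lemma π₀_ker : LinearMap.ker (mcπ R N) = LinearMap.range (δ R N 0) := by
  rw [δ_range]; rfl

lemma π₀_δ : (mcπ R N) ∘ₗ (δ R N 0) = 0 := by
  apply LinearMap.ext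
  intro x
  have h : δ R N 0 x ∈ LinearMap.ker (mcπ R N) := by
    rw [π₀_ker]; exact ⟨x, rfl⟩
  exact h

/-- the chain complex -/
noncomputable def CC : ChainComplex (ModuleCat.{0} R) ℕ :=
  ChainComplex.of (fun j => ModuleCat.of R (FM R N j))
    (fun j => ModuleCat.ofHom (δ R N j))
    (fun j => by
      apply ModuleCat.hom_ext
      apply LinearMap.ext
      intro x
      exact DFunLike.congr_fun (δ_comp R N j) x)

lemma CC_X (j : ℕ) : (CC R N).X j = ModuleCat.of R (FM R N j) := rfl

lemma CC_d (j : ℕ) : (CC R N).d (j+1) j = ModuleCat.ofHom (δ R N j) :=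
  ChainComplex.of_d (fun j => ModuleCat.of R (FM R N j)) (fun j => ModuleCat.ofHom (δ R N j)) j

instance CC_proj (j : ℕ) : Projective ((CC R N).X j) :=
  (IsProjective.iff_projective (FM R N j)).1 (Module.Projective.of_basis (Pi.basisFun R (Fin (bb R N j))))


/-- the augmentation map to the single complex -/
noncomputable def πC : CC R N ⟶ (ChainComplex.single₀ (ModuleCat.{0} R)).obj (ModuleCat.of R N) :=
  (ChainComplex.toSingle₀Equiv (CC R N) (ModuleCat.of R N)).symm
    ⟨ModuleCat.ofHom (mcπ R N), by
      rw [CC_d]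
      apply ModuleCat.hom_ext
      apply LinearMap.ext
      intro x
      exact DFunLike.congr_fun (π₀_δ R N) x⟩

lemma πC_f_zero : (πC R N).f 0 = ModuleCat.ofHom (mcπ R N) :=
  ChainComplex.toSingle₀Equiv_symm_apply_f_zero _ _

lemma CC_exactAt_succ (j : ℕ) : (CC R N).ExactAt (j+1) := by
  rw [HomologicalComplex.exactAt_iff' (CC R N) (j+2) (j+1) j (by simp) (by simp)]
  rw [ShortComplex.moduleCat_exact_iff]
  intro x hx
  have hd1 : (CC R N).d (j+1) j = ModuleCat.ofHom (δ R N j) := CC_d R N j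
  have hd2 : (CC R N).d (j+2) (j+1) = ModuleCat.ofHom (δ R N (j+1)) := CC_d R N (j+1)
  have hx0 : ((CC R N).d (j+1) j) x = 0 := hx
  rw [hd1] at hx0
  have hx' : x ∈ LinearMap.ker (δ R N j) := hx0
  rw [δ_ker, ← δ_range] at hx'
  obtain ⟨y, hy⟩ := hx'
  refine ⟨y, ?_⟩
  show ((CC R N).d (j+2) (j+1)) y = x
  rw [hd2]
  exact hy

instance πC_quasiIso : QuasiIso (πC R N) := by
  constructor
  intro i
  cases i with
  | zero =>
    rw [ChainComplex.quasiIsoAt₀_iff, ShortComplex.quasiIso_iff_of_zeros']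
    rotate_left
    · exact (CC R N).shape 0 0 (by simp)
    · rfl
    · rfl
    constructor
    · rw [ShortComplex.moduleCat_exact_iff]
      intro x hx
      have h0 : ((πC R N).f 0) x = 0 := hx
      rw [πC_f_zero] at h0
      have hx' : x ∈ LinearMap.ker (mcπ R N) := h0
      rw [π₀_ker] at hx'
      obtain ⟨y, hy⟩ := hx'
      refine ⟨y, ?_⟩
      show ((CC R N).d 1 0) y = x
      have hd : (CC R N).d 1 0 = ModuleCat.ofHom (δ R N 0) := CC_d R N 0
      rw [hd]
      exact hy
    · show Epi ((πC R N).f 0)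
      rw [πC_f_zero]
      exact (ModuleCat.epi_iff_surjective _).2 (mcπ_surj R N)
  | succ j =>
    rw [quasiIsoAt_iff_exactAt (πC R N) (j+1) (CC_exactAt_succ R N j)]
    exact HomologicalComplex.exactAt_single_obj _ _ _ _ (by simp)

/-- the projective resolution -/
noncomputable def PR : ProjectiveResolution (ModuleCat.of R N) where
  complex := CC R N
  π := πC R N


lemma subsingleton_of_isZero {X : ModuleCat.{0} R} (h : Limits.IsZero X) :
    Subsingleton X := by
  refine ⟨fun a b => ?_⟩
  have h1 : (𝟙 X : X ⟶ X) = 0 := h.eq_of_src _ _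
  have ha : a = (𝟙 X : X ⟶ X) a := rfl
  have hb : b = (𝟙 X : X ⟶ X) b := rfl
  rw [ha, hb, h1]
  rfl

lemma ext_subsingleton_iff (n : ℕ) (W : ModuleCat.{0} R) :
    Subsingleton (((Ext R (ModuleCat.{0} R) n).obj (Opposite.op (ModuleCat.of R N))).obj W) ↔
      ((CC R N).linearYonedaObj R W).ExactAt n := by
  have e : (((Ext R (ModuleCat.{0} R) n).obj (Opposite.op (ModuleCat.of R N))).obj W) ≅
      ((CC R N).linearYonedaObj R W).homology n := (PR R N).isoExt (R := R) n W
  constructor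
  · intro h
    rw [HomologicalComplex.exactAt_iff_isZero_homology]
    exact Limits.IsZero.of_iso (ModuleCat.isZero_of_subsingleton _) e.symm
  · intro h
    rw [HomologicalComplex.exactAt_iff_isZero_homology] at h
    haveI : Subsingleton (((CC R N).linearYonedaObj R W).homology n) :=
      subsingleton_of_isZero R h
    exact Equiv.subsingleton e.toLinearEquiv.toEquiv

lemma yoneda_exactAt_zero_iff (W : ModuleCat.{0} R) :
    ((CC R N).linearYonedaObj R W).ExactAt 0 ↔
      ∀ α : FM R N 0 →ₗ[R] ↑W, α ∘ₗ (δ R N 0) = 0 → α = 0 := by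
  rw [HomologicalComplex.exactAt_iff' _ 0 0 1 (by simp) (by simp),
    ShortComplex.moduleCat_exact_iff]
  have hd : (CC R N).d 1 0 = ModuleCat.ofHom (δ R N 0) := CC_d R N 0
  have hf0 : ((CC R N).linearYonedaObj R W).d 0 0 = 0 :=
    HomologicalComplex.shape _ 0 0 (by simp)
  constructor
  · intro h α hα
    have hcoc : (((CC R N).linearYonedaObj R W).d 0 1)
        (ModuleCat.ofHom α : (CC R N).X 0 ⟶ W) = 0 := by
      show ((CC R N).d 1 0) ≫ (ModuleCat.ofHom α : (CC R N).X 0 ⟶ W) = 0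
      rw [hd]
      apply ModuleCat.hom_ext
      exact hα
    obtain ⟨x₁, hx₁⟩ := h _ hcoc
    have hx₁' : (((CC R N).linearYonedaObj R W).d 0 0) x₁ =
        (ModuleCat.ofHom α : (CC R N).X 0 ⟶ W) := hx₁
    rw [hf0] at hx₁'
    exact congrArg ModuleCat.Hom.hom hx₁'.symm
  · intro h x hx
    have hx' : ModuleCat.Hom.hom (x : (CC R N).X 0 ⟶ W) ∘ₗ (δ R N 0) = 0 := by
      have h1 : (((CC R N).linearYonedaObj R W).d 0 1) x = 0 := hx
      have h2 : ((CC R N).d 1 0) ≫ (x : (CC R N).X 0 ⟶ W) = 0 := h1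
      rw [hd] at h2
      exact congrArg ModuleCat.Hom.hom h2
    have hx0 : (x : (CC R N).X 0 ⟶ W) = 0 := ModuleCat.hom_ext (h _ hx')
    refine ⟨0, ?_⟩
    show (((CC R N).linearYonedaObj R W).d 0 0) 0 = x
    rw [hf0, hx0]
    rfl

lemma yoneda_exactAt_succ_iff (m : ℕ) (W : ModuleCat.{0} R) :
    ((CC R N).linearYonedaObj R W).ExactAt (m+1) ↔
      ∀ α : FM R N (m+1) →ₗ[R] ↑W, α ∘ₗ (δ R N (m+1)) = 0 →
        ∃ β : FM R N m →ₗ[R] ↑W, β ∘ₗ (δ R N m) = α := by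
  rw [HomologicalComplex.exactAt_iff' _ m (m+1) (m+2) (by simp) (by simp),
    ShortComplex.moduleCat_exact_iff]
  have hd1 : (CC R N).d (m+1) m = ModuleCat.ofHom (δ R N m) := CC_d R N m
  have hd2 : (CC R N).d (m+2) (m+1) = ModuleCat.ofHom (δ R N (m+1)) := CC_d R N (m+1)
  constructor
  · intro h α hα
    have hcoc : (((CC R N).linearYonedaObj R W).d (m+1) (m+2))
        (ModuleCat.ofHom α : (CC R N).X (m+1) ⟶ W) = 0 := by
      show ((CC R N).d (m+2) (m+1)) ≫ (ModuleCat.ofHom α : (CC R N).X (m+1) ⟶ W) = 0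
      rw [hd2]
      apply ModuleCat.hom_ext
      exact hα
    obtain ⟨β, hβ⟩ := h _ hcoc
    refine ⟨ModuleCat.Hom.hom (β : (CC R N).X m ⟶ W), ?_⟩
    have hβ' : ((CC R N).d (m+1) m) ≫ (β : (CC R N).X m ⟶ W) =
        (ModuleCat.ofHom α : (CC R N).X (m+1) ⟶ W) := hβ
    rw [hd1] at hβ'
    exact congrArg ModuleCat.Hom.hom hβ'
  · intro h x hx
    have hx' : ModuleCat.Hom.hom (x : (CC R N).X (m+1) ⟶ W) ∘ₗ (δ R N (m+1)) = 0 := by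
      have h2 : ((CC R N).d (m+2) (m+1)) ≫ (x : (CC R N).X (m+1) ⟶ W) = 0 := hx
      rw [hd2] at h2
      exact congrArg ModuleCat.Hom.hom h2
    obtain ⟨β, hβ⟩ := h _ hx'
    refine ⟨(ModuleCat.ofHom β : (CC R N).X m ⟶ W), ?_⟩
    show ((CC R N).d (m+1) m) ≫ (ModuleCat.ofHom β : (CC R N).X m ⟶ W) = x
    rw [hd1]
    apply ModuleCat.hom_ext
    exact hβ

end Resolution

section Core

variable {R : Type} [CommRing R] {S : Type} [CommRing S] [Algebra R S]
variable {M : Type} [AddCommGroup M] [Module R M] [Module S M] [IsScalarTower R S M]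

example : SMulCommClass R S M := inferInstance

/-- inclusion of a submodule, as an `R`-linear map -/
def incW (W : Submodule S M) : ↥W →ₗ[R] M where
  toFun x := (x : M)
  map_add' x y := rfl
  map_smul' r x := rfl

/-- corestriction -/
def toW (W : Submodule S M) {b : ℕ} (f : (Fin b → R) →ₗ[R] M) (hf : ∀ x, f x ∈ W) :
    (Fin b → R) →ₗ[R] ↥W where
  toFun x := ⟨f x, hf x⟩
  map_add' x y := Subtype.ext (f.map_add x y)
  map_smul' r x := Subtype.ext (by simp)

lemma toW_val (W : Submodule S M) {b : ℕ} (f : (Fin b → R) →ₗ[R] M) (hf : ∀ x, f x ∈ W)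
    (x : Fin b → R) : ((toW W f hf) x : M) = f x := rfl

/-- homs with values in a submodule -/
def HW (b : ℕ) (W : Submodule S M) : Submodule S ((Fin b → R) →ₗ[R] M) where
  carrier := {φ | ∀ x, φ x ∈ W}
  add_mem' := fun hφ hψ x => W.add_mem (hφ x) (hψ x)
  zero_mem' := fun x => W.zero_mem
  smul_mem' := fun s φ hφ x => by
    show s • (φ x) ∈ W
    exact W.smul_mem s (hφ x)

lemma mem_HW {b : ℕ} {W : Submodule S M} {φ : (Fin b → R) →ₗ[R] M} :
    φ ∈ HW b W ↔ ∀ x, φ x ∈ W := Iff.rfl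

/-- precomposition as an `S`-linear map -/
def Dmap {b b' : ℕ} (d : (Fin b' → R) →ₗ[R] (Fin b → R)) :
    ((Fin b → R) →ₗ[R] M) →ₗ[S] ((Fin b' → R) →ₗ[R] M) where
  toFun φ := φ ∘ₗ d
  map_add' φ ψ := rfl
  map_smul' s φ := rfl

lemma apply_mem_smul {b : ℕ} (I : Ideal R) (W : Submodule S M) (φ : (Fin b → R) →ₗ[R] M)
    (hφ : ∀ y, φ y ∈ W) {x : Fin b → R} (hx : x ∈ (I • ⊤ : Submodule R (Fin b → R))) :
    φ x ∈ I • (W.restrictScalars R) := by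
  refine Submodule.smul_induction_on hx ?_ ?_
  · intro a ha y _
    rw [map_smul]
    exact Submodule.smul_mem_smul ha (hφ y)
  · intro y z hy hz
    rw [map_add]
    exact Submodule.add_mem _ hy hz

/-- single-coordinate insertion, `S`-linearly in the value -/
def singW (b : ℕ) (c : Fin b) : M →ₗ[S] ((Fin b → R) →ₗ[R] M) where
  toFun m :=
    { toFun := fun v => v c • m
      map_add' := fun v w => by
        show (v c + w c) • m = v c • m + w c • m
        rw [add_smul]
      map_smul' := fun r v => by
        show (r * v c) • m = r • (v c • m)
        rw [mul_smul] }
  map_add' m m' := by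
    apply LinearMap.ext
    intro v
    show v c • (m + m') = v c • m + v c • m'
    rw [smul_add]
  map_smul' s m := by
    apply LinearMap.ext
    intro v
    show v c • (s • m) = s • (v c • m)
    rw [smul_comm]

lemma HW_le_smul (b : ℕ) (J' : Ideal S) (V W : Submodule S M) (h : V ≤ J' • W) :
    HW b V ≤ J' • HW (R := R) b W := by
  intro φ hφ
  have hrep : φ = ∑ c : Fin b, singW (R := R) (S := S) b c (φ (fun j => if c = j then 1 else 0)) := by
    apply LinearMap.ext
    intro v
    rw [LinearMap.pi_apply_eq_sum_univ φ v, LinearMap.sum_apply]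
    rfl
  rw [hrep]
  refine Submodule.sum_mem _ ?_
  intro c _
  have h1 : φ (fun j => if c = j then 1 else 0) ∈ J' • W := h (hφ _)
  have h2 : singW (R := R) (S := S) b c (φ (fun j => if c = j then 1 else 0)) ∈
      Submodule.map (singW (R := R) (S := S) b c) (J' • W) := Submodule.mem_map_of_mem h1
  rw [Submodule.map_smul''] at h2
  refine SetLike.le_def.1 (smul_mono_right _ ?_) h2
  rintro _ ⟨m, hm, rfl⟩
  intro v
  show v c • m ∈ W
  rw [← algebraMap_smul S (v c) m]
  exact W.smul_mem _ hm

/-- evaluation on the standard basis, `S`-linearly -/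
def evW (b : ℕ) : ((Fin b → R) →ₗ[R] M) →ₗ[S] (Fin b → M) where
  toFun φ := fun c => φ (fun j => if c = j then 1 else 0)
  map_add' φ ψ := by funext c; rfl
  map_smul' s φ := by funext c; rfl

lemma evW_inj (b : ℕ) : Function.Injective (evW (R := R) (S := S) (M := M) b) := by
  intro φ ψ h
  apply LinearMap.ext
  intro v
  rw [LinearMap.pi_apply_eq_sum_univ φ v, LinearMap.pi_apply_eq_sum_univ ψ v]
  refine Finset.sum_congr rfl ?_
  intro c _
  have hc : φ (fun j => if c = j then 1 else 0) = ψ (fun j => if c = j then 1 else 0) :=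
    congrFun h c
  rw [hc]

lemma HW_fg [IsNoetherianRing S] [Module.Finite S M] (b : ℕ) (W : Submodule S M) :
    (HW (R := R) b W).FG := by
  haveI : IsNoetherian S M := isNoetherian_of_isNoetherianRing_of_finite S M
  haveI : IsNoetherian S ((Fin b → R) →ₗ[R] M) :=
    isNoetherian_of_injective (evW b) (evW_inj b)
  exact IsNoetherian.noetherian _

end Core
end ExtVanishAux

open ExtVanishAux in
theorem ext_vanishing_along_filtration
    (R : Type) [CommRing R] [IsNoetherianRing R] [IsLocalRing R]
    (S : Type) [CommRing S] [IsNoetherianRing S] [Algebra R S]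
    (hmS : (maximalIdeal R).map (algebraMap R S) ≤ (⊥ : Ideal S).jacobson)
    (M : Type) [AddCommGroup M] [Module R M] [Module S M] [IsScalarTower R S M]
    [Nontrivial M] [Module.Finite S M]
    (t : ℕ) (ht : 1 ≤ t)
    (Mfil : ℕ → Submodule S M)
    (hM0 : Mfil 0 = ⊤)
    (hlow : ∀ i, 1 ≤ i → i ≤ t →
      maximalIdeal R • (Mfil (i - 1)).restrictScalars R ≤ (Mfil i).restrictScalars R)
    (hhigh : ∀ i, 1 ≤ i → i ≤ t → Mfil i ≤ (⊥ : Ideal S).jacobson • Mfil (i - 1))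
    (hreg : ∃ r ∈ maximalIdeal R, ∀ x : M, r • x = 0 → x = 0)
    (N : Type) [AddCommGroup N] [Module R N] [Module.Finite R N]
    (n : ℕ) (i : ℕ) (hi1 : 1 ≤ i) (hit : i ≤ t)
    (hvanish : Subsingleton
      (((Ext R (ModuleCat.{0} R) n).obj (Opposite.op (ModuleCat.of R N))).obj
        (ModuleCat.of R ↥(Mfil i)))) :
    Subsingleton
      (((Ext R (ModuleCat.{0} R) n).obj (Opposite.op (ModuleCat.of R N))).obj
        (ModuleCat.of R ↥(Mfil (i - 1)))) := by
  classical
  obtain ⟨r, hrm, hreg'⟩ := hreg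
  have hlow' : maximalIdeal R • (Mfil (i-1)).restrictScalars R ≤ (Mfil i).restrictScalars R :=
    hlow i hi1 hit
  have hhigh' : Mfil i ≤ (⊥ : Ideal S).jacobson • Mfil (i-1) := hhigh i hi1 hit
  have hW10 : Mfil i ≤ Mfil (i-1) := le_trans hhigh' Submodule.smul_le_right
  have hrval : ∀ {b : ℕ} (φ : (Fin b → R) →ₗ[R] M), (∀ x, φ x ∈ Mfil (i-1)) →
      ∀ x, r • (φ x) ∈ Mfil i := by
    intro b φ hφ x
    have h1 : r • (φ x) ∈ maximalIdeal R • (Mfil (i-1)).restrictScalars R :=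
      Submodule.smul_mem_smul hrm (hφ x)
    exact hlow' h1
  rw [ext_subsingleton_iff R N n (ModuleCat.of R ↥(Mfil i))] at hvanish
  rw [ext_subsingleton_iff R N n (ModuleCat.of R ↥(Mfil (i-1)))]
  cases n with
  | zero =>
    rw [yoneda_exactAt_zero_iff] at hvanish
    rw [yoneda_exactAt_zero_iff]
    replace hvanish : ∀ γ : FM R N 0 →ₗ[R] ↥(Mfil i), γ ∘ₗ (δ R N 0) = 0 → γ = 0 := hvanish
    show ∀ α : FM R N 0 →ₗ[R] ↥(Mfil (i-1)), α ∘ₗ (δ R N 0) = 0 → α = 0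
    intro α hα
    have hᾱmem : ∀ x, (incW (R := R) (Mfil (i-1)) ∘ₗ α) x ∈ Mfil (i-1) := fun x => (α x).2
    have hβmem : ∀ x, (r • (incW (R := R) (Mfil (i-1)) ∘ₗ α)) x ∈ Mfil i := by
      intro x
      show r • ((incW (R := R) (Mfil (i-1)) ∘ₗ α) x) ∈ Mfil i
      exact hrval _ hᾱmem x
    have hγcoc : (toW (Mfil i) (r • (incW (R := R) (Mfil (i-1)) ∘ₗ α)) hβmem) ∘ₗ (δ R N 0) = 0 := by
      apply LinearMap.ext
      intro x
      apply Subtype.ext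
      show r • ((incW (R := R) (Mfil (i-1)) ∘ₗ α) ((δ R N 0) x)) = (0 : M)
      have hax : α ((δ R N 0) x) = 0 := DFunLike.congr_fun hα x
      show r • (incW (R := R) (Mfil (i-1)) (α ((δ R N 0) x))) = (0 : M)
      rw [hax, map_zero, smul_zero]
    have hγ0 := hvanish _ hγcoc
    apply LinearMap.ext
    intro x
    apply Subtype.ext
    have h1 : r • ((α x : M)) = 0 := by
      have h2 := DFunLike.congr_fun hγ0 x
      have h3 : ((toW (Mfil i) (r • (incW (R := R) (Mfil (i-1)) ∘ₗ α)) hβmem) x : M) = 0 := by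
        rw [h2]; rfl
      exact h3
    have h4 : (α x : M) = 0 := hreg' _ h1
    rw [h4]; rfl
  | succ m =>
    rw [yoneda_exactAt_succ_iff] at hvanish
    rw [yoneda_exactAt_succ_iff]
    replace hvanish : ∀ γ : FM R N (m+1) →ₗ[R] ↥(Mfil i), γ ∘ₗ (δ R N (m+1)) = 0 →
        ∃ ε : FM R N m →ₗ[R] ↥(Mfil i), ε ∘ₗ (δ R N m) = γ := hvanish
    show ∀ α : FM R N (m+1) →ₗ[R] ↥(Mfil (i-1)), α ∘ₗ (δ R N (m+1)) = 0 →
        ∃ β : FM R N m →ₗ[R] ↥(Mfil (i-1)), β ∘ₗ (δ R N m) = α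
    set J : Ideal S := (⊥ : Ideal S).jacobson with hJ
    set B : Submodule S ((FM R N (m+1)) →ₗ[R] M) :=
      Submodule.map (Dmap (S := S) (δ R N m)) (HW (bb R N m) (Mfil (i-1))) with hB
    -- key: every coboundary with values in Mfil (i-1) is also a coboundary
    -- coming from values in Mfil i
    have hkey : ∀ φ : (FM R N m) →ₗ[R] M, (∀ x, φ x ∈ Mfil (i-1)) →
        ∃ ε : (FM R N m) →ₗ[R] M, (∀ x, ε x ∈ Mfil i) ∧
          ε ∘ₗ (δ R N m) = φ ∘ₗ (δ R N m) := by
      intro φ hφ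
      have hval : ∀ x, (φ ∘ₗ (δ R N m)) x ∈ Mfil i := by
        intro x
        have h2 : (δ R N m) x ∈ LinearMap.range (δ R N m) := ⟨x, rfl⟩
        rw [δ_range] at h2
        have h1 : (δ R N m) x ∈ (maximalIdeal R) • (⊤ : Submodule R (FM R N m)) :=
          Kseq_le R N m h2
        have h3 := apply_mem_smul (maximalIdeal R) (Mfil (i-1)) φ hφ h1
        exact hlow' h3
      have hcoc : (toW (Mfil i) (φ ∘ₗ (δ R N m)) hval) ∘ₗ (δ R N (m+1)) = 0 := by
        apply LinearMap.ext
        intro x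
        apply Subtype.ext
        show φ ((δ R N m) ((δ R N (m+1)) x)) = (0 : M)
        have h4 : (δ R N m) ((δ R N (m+1)) x) = 0 := DFunLike.congr_fun (δ_comp R N m) x
        rw [h4, map_zero]
      obtain ⟨ε₁, hε₁⟩ := hvanish _ hcoc
      refine ⟨incW (R := R) (Mfil i) ∘ₗ ε₁, fun x => (ε₁ x).2, ?_⟩
      apply LinearMap.ext
      intro x
      have h5 := DFunLike.congr_fun hε₁ x
      exact congrArg Subtype.val h5
    have hBle : B ≤ J • B := by
      rintro _ ⟨φ, hφ, rfl⟩
      obtain ⟨ε, hεval, hεeq⟩ := hkey φ hφ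
      have h5 : Dmap (S := S) (δ R N m) φ = Dmap (S := S) (δ R N m) ε := by
        show φ ∘ₗ (δ R N m) = ε ∘ₗ (δ R N m)
        exact hεeq.symm
      rw [h5]
      have h7 : ε ∈ J • HW (bb R N m) (Mfil (i-1)) :=
        HW_le_smul _ J (Mfil i) (Mfil (i-1)) hhigh' hεval
      have h8 := Submodule.mem_map_of_mem (f := Dmap (S := S) (δ R N m)) h7
      rw [Submodule.map_smul''] at h8
      exact h8
    have hBfg : B.FG := (HW_fg _ _).map _
    have hB0 : B = ⊥ :=
      Submodule.eq_bot_of_le_smul_of_le_jacobson_bot J B hBfg hBle le_rfl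
    intro α hα
    have hᾱmem : ∀ x, (incW (R := R) (Mfil (i-1)) ∘ₗ α) x ∈ Mfil (i-1) := fun x => (α x).2
    have hβmem : ∀ x, (r • (incW (R := R) (Mfil (i-1)) ∘ₗ α)) x ∈ Mfil i := by
      intro x
      show r • ((incW (R := R) (Mfil (i-1)) ∘ₗ α) x) ∈ Mfil i
      exact hrval _ hᾱmem x
    have hγcoc : (toW (Mfil i) (r • (incW (R := R) (Mfil (i-1)) ∘ₗ α)) hβmem) ∘ₗ (δ R N (m+1)) = 0 := by
      apply LinearMap.ext
      intro x
      apply Subtype.ext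
      show r • ((incW (R := R) (Mfil (i-1)) ∘ₗ α) ((δ R N (m+1)) x)) = (0 : M)
      have hax : α ((δ R N (m+1)) x) = 0 := DFunLike.congr_fun hα x
      show r • (incW (R := R) (Mfil (i-1)) (α ((δ R N (m+1)) x))) = (0 : M)
      rw [hax, map_zero, smul_zero]
    obtain ⟨ε₁, hε₁⟩ := hvanish _ hγcoc
    have hmem : r • (incW (R := R) (Mfil (i-1)) ∘ₗ α) ∈ B := by
      refine ⟨incW (R := R) (Mfil i) ∘ₗ ε₁, fun x => hW10 (ε₁ x).2, ?_⟩
      show (incW (R := R) (Mfil i) ∘ₗ ε₁) ∘ₗ (δ R N m) = r • (incW (R := R) (Mfil (i-1)) ∘ₗ α)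
      apply LinearMap.ext
      intro x
      have h5 := DFunLike.congr_fun hε₁ x
      exact congrArg Subtype.val h5
    rw [hB0] at hmem
    have hz : r • (incW (R := R) (Mfil (i-1)) ∘ₗ α) = 0 := hmem
    have hα0 : α = 0 := by
      apply LinearMap.ext
      intro x
      apply Subtype.ext
      have h1 : r • ((α x : M)) = 0 := by
        have h2 := DFunLike.congr_fun hz x
        exact h2
      have h4 : (α x : M) = 0 := hreg' _ h1
      rw [h4]; rfl
    refine ⟨0, ?_⟩
    rw [hα0]
    exact LinearMap.zero_comp _
end

section
/- Assume the filtration setup. If N is a finitely generated R-module, n ≥ 1 is an integer, 1 ≤ i ≤ t, Ext^n_R(N, M_i) = 0, and M_{i-1} is faithful as an R-module (its R-annihilator is zero), then the projective dimension of N over R is at most n − 1. -/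
open CategoryTheory IsLocalRing

set_option linter.unusedSectionVars false
set_option linter.unusedVariables false
set_option linter.unnecessarySimpa false

section MinimalCover
variable {R : Type} [CommRing R] [IsLocalRing R]

theorem exists_minimal_cover (X : Type) [AddCommGroup X] [Module R X] [Module.Finite R X] :
    ∃ (b : ℕ) (p : (Fin b → R) →ₗ[R] X), Function.Surjective p ∧
      ∀ c ∈ LinearMap.ker p, ∀ j, c j ∈ maximalIdeal R := by
  classical
  set k := ResidueField R
  let V := X ⧸ (maximalIdeal R • ⊤ : Submodule R X)
  letI : Module k V :=
    (inferInstance : Module (R ⧸ maximalIdeal R) (X ⧸ maximalIdeal R • (⊤ : Submodule R X)))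
  letI : IsScalarTower R k V :=
    (inferInstance : IsScalarTower R (R ⧸ maximalIdeal R) (X ⧸ maximalIdeal R • (⊤ : Submodule R X)))
  haveI : Module.Finite k V := Module.Finite.of_restrictScalars_finite R _ _
  let bas := Module.finBasis k V
  set b := Module.finrank k V
  let q : X →ₗ[R] V := Submodule.mkQ _
  have hq : Function.Surjective q := Submodule.mkQ_surjective _
  choose x hx using fun j => hq (bas j)
  let p : (Fin b → R) →ₗ[R] X := Fintype.linearCombination R x
  have hp : ∀ c : Fin b → R, p c = ∑ j, c j • x j := fun c => rfl
  have hqp : ∀ c : Fin b → R, q (p c) = ∑ j, c j • (bas j : V) := by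
    intro c
    rw [hp, map_sum]
    simp [hx]
  refine ⟨b, p, ?_, ?_⟩
  · -- surjectivity via Nakayama
    rw [← LinearMap.range_eq_top, ← IsLocalRing.map_mkQ_eq_top]
    rw [eq_top_iff]
    intro v _
    obtain ⟨w, rfl⟩ := Submodule.mkQ_surjective _ v
    choose r hr using fun j => Ideal.Quotient.mk_surjective (I := maximalIdeal R) (bas.repr (q w) j)
    have key : Submodule.mkQ (maximalIdeal R • ⊤ : Submodule R X) (p r) = Submodule.mkQ _ w := by
      show q (p r) = q w
      rw [hqp]
      have : ∀ j, residue R (r j) • (bas j : V) = r j • (bas j : V) := fun j =>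
        (IsScalarTower.algebraMap_smul k (r j) (bas j : V))
      calc ∑ j, r j • (bas j : V) = ∑ j, residue R (r j) • (bas j : V) :=
            (Finset.sum_congr rfl fun j _ => (this j).symm).symm ▸ rfl
        _ = ∑ j, bas.repr (q w) j • (bas j : V) := by
            refine Finset.sum_congr rfl fun j _ => by rw [show residue R (r j) = bas.repr (q w) j from hr j]
        _ = q w := bas.sum_repr (q w)
    rw [← key]
    exact Submodule.mem_map_of_mem (LinearMap.mem_range_self p r)
  · intro c hc j
    have h0 : (0 : V) = ∑ j, c j • (bas j : V) := by
      rw [← hqp c]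
      rw [LinearMap.mem_ker] at hc
      rw [hc, map_zero]
    have : ∀ j, residue R (c j) • (bas j : V) = c j • (bas j : V) := fun j =>
      (IsScalarTower.algebraMap_smul k (c j) (bas j : V))
    have h1 : ∑ j, residue R (c j) • (bas j : V) = 0 := by
      rw [Finset.sum_congr rfl fun j _ => this j, ← h0]
    have h2 := Fintype.linearIndependent_iff.mp bas.linearIndependent _ h1 j
    rwa [← Ideal.Quotient.eq_zero_iff_mem]

end MinimalCover

structure MinTower (R : Type) [CommRing R] [IsLocalRing R] : Type 1 where
  X : Type
  [ab : AddCommGroup X]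
  [mod : Module R X]
  fin : Module.Finite R X
  b : ℕ
  p : (Fin b → R) →ₗ[R] X
  surj : Function.Surjective p
  ker_le : ∀ c ∈ LinearMap.ker p, ∀ j, c j ∈ maximalIdeal R

attribute [instance] MinTower.ab MinTower.mod

namespace MinTower
variable {R : Type} [CommRing R] [IsLocalRing R]

noncomputable def mk' (X : Type) [AddCommGroup X] [Module R X] (fin : Module.Finite R X) :
    MinTower R :=
  { X := X
    fin := fin
    b := (exists_minimal_cover X).choose
    p := (exists_minimal_cover X).choose_spec.choose
    surj := (exists_minimal_cover X).choose_spec.choose_spec.1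
    ker_le := (exists_minimal_cover X).choose_spec.choose_spec.2 }

noncomputable def step [IsNoetherianRing R] (t : MinTower R) : MinTower R :=
  mk' ↥(LinearMap.ker t.p)
    (Module.Finite.iff_fg.mpr (IsNoetherian.noetherian _))

end MinTower

section Res

variable (R : Type) [CommRing R] [IsLocalRing R] [IsNoetherianRing R]
variable (N : Type) [AddCommGroup N] [Module R N] [Module.Finite R N]

noncomputable def towerSeq : ℕ → MinTower R := fun j =>
  Nat.rec (MinTower.mk' N inferInstance) (fun _ t => t.step) j

local notation "t" j => towerSeq R N j

noncomputable def dres (j : ℕ) :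
    ((Fin ((t (j+1)).b) → R) →ₗ[R] (Fin ((t j).b) → R)) :=
  (LinearMap.ker ((t j)).p).subtype.comp
    (((t (j+1)).p : (Fin ((t (j+1)).b) → R) →ₗ[R] ↥(LinearMap.ker ((t j)).p)))

lemma dres_sq (j : ℕ) : ((dres R N j).comp (dres R N (j+1))) = 0 := by
  refine LinearMap.ext fun x => ?_
  show (LinearMap.ker ((t j)).p).subtype
    (((t (j+1)).p) ((LinearMap.ker ((t (j+1)).p)).subtype (((t (j+2)).p) x))) = 0
  rw [show (((t (j+1)).p) ((LinearMap.ker ((t (j+1)).p)).subtype (((t (j+2)).p) x)))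
    = 0 from LinearMap.congr_fun (LinearMap.comp_ker_subtype ((t (j+1)).p)) _]
  simp
  rfl

noncomputable def resC : ChainComplex (ModuleCat.{0} R) ℕ :=
  ChainComplex.of (fun j => ModuleCat.of R (Fin ((t j).b) → R))
    (fun j => ModuleCat.ofHom (dres R N j))
    (fun j => by rw [← ModuleCat.ofHom_comp, dres_sq]; rfl)

lemma resC_d (j : ℕ) : (resC R N).d (j+1) j = ModuleCat.ofHom (dres R N j) := by
  simp [resC]

lemma resC_exactAt_succ (n : ℕ) : (resC R N).ExactAt (n+1) := by
  rw [HomologicalComplex.exactAt_iff' _ (n+2) (n+1) n (by simp) (by simp),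
    ShortComplex.moduleCat_exact_iff]
  intro x hx
  have hx2 : (resC R N).d (n+1) n x = 0 := hx
  rw [show (resC R N).d (n+1) n = (ModuleCat.ofHom (dres R N n)) from resC_d R N n] at hx2
  have hker : ((t (n+1)).p x : ↥(LinearMap.ker ((t n)).p)) = 0 := ZeroMemClass.coe_eq_zero.mp hx2
  obtain ⟨y, hy⟩ := (t (n+2)).surj ⟨x, hker⟩
  refine ⟨y, ?_⟩
  show (resC R N).d (n+2) (n+1) y = x
  rw [show (resC R N).d (n+2) (n+1) = (ModuleCat.ofHom (dres R N (n+1))) from resC_d R N (n+1)]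
  show (LinearMap.ker ((t (n+1)).p)).subtype (((t (n+2)).p) y) = x
  rw [hy]
  rfl

noncomputable def resPi :
    resC R N ⟶ (ChainComplex.single₀ (ModuleCat.{0} R)).obj (ModuleCat.of R N) :=
  (ChainComplex.toSingle₀Equiv _ _).symm
    ⟨(ModuleCat.ofHom (t 0).p : ModuleCat.of R (Fin ((t 0).b) → R) ⟶ ModuleCat.of R N), by
      rw [show (resC R N).d 1 0 = (ModuleCat.ofHom (dres R N 0)) from resC_d R N 0]
      refine ModuleCat.hom_ext (LinearMap.ext fun x => ?_)
      show ((t 0)).p ((LinearMap.ker ((t 0)).p).subtype (((t 1)).p x)) = 0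
      rw [show (((t 0)).p ((LinearMap.ker ((t 0)).p).subtype (((t 1)).p x)))
        = 0 from LinearMap.congr_fun (LinearMap.comp_ker_subtype ((t 0)).p) _]⟩

lemma resPi_f_zero : (resPi R N).f 0
    = (ModuleCat.ofHom (t 0).p : ModuleCat.of R (Fin ((t 0).b) → R) ⟶ ModuleCat.of R N) := by
  simp [resPi]
  rfl

noncomputable def resPR : ProjectiveResolution (ModuleCat.of R N) where
  complex := resC R N
  projective := fun j => ModuleCat.projective_of_free (M := ModuleCat.of R (Fin ((t j).b) → R))
    (Pi.basisFun R (Fin ((t j).b)))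
  π := resPi R N
  quasiIso := ⟨fun n => by
    cases n with
    | zero =>
      rw [ChainComplex.quasiIsoAt₀_iff, ShortComplex.quasiIso_iff_of_zeros']
      · constructor
        · rw [ShortComplex.moduleCat_exact_iff]
          intro x hx
          have hx2 : (resPi R N).f 0 x = 0 := hx
          rw [resPi_f_zero] at hx2
          obtain ⟨y, hy⟩ := (t 1).surj ⟨x, hx2⟩
          refine ⟨y, ?_⟩
          show (resC R N).d 1 0 y = x
          rw [show (resC R N).d 1 0 = (ModuleCat.ofHom (dres R N 0)) from resC_d R N 0]
          show (LinearMap.ker ((t 0)).p).subtype (((t 1)).p y) = x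
          rw [hy]
          rfl
        · have : Epi ((resPi R N).f 0) := by
            rw [resPi_f_zero]
            exact (ModuleCat.epi_iff_surjective _).mpr (t 0).surj
          exact this
      all_goals rfl
    | succ n =>
      rw [quasiIsoAt_iff_exactAt']
      · exact resC_exactAt_succ R N n
      · apply ChainComplex.exactAt_succ_single_obj⟩

lemma subsingleton_iff_of_iso {X Y : ModuleCat.{0} R} (e : X ≅ Y) :
    Subsingleton X ↔ Subsingleton Y := by
  have h1 : ∀ y : (Y : Type), e.hom (e.inv y) = y := fun y =>
    congrArg (fun f : Y ⟶ Y => f y) e.inv_hom_id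
  have h2 : ∀ x : (X : Type), e.inv (e.hom x) = x := fun x =>
    congrArg (fun f : X ⟶ X => f x) e.hom_inv_id
  constructor
  · intro h
    exact ⟨fun a b => by rw [← h1 a, ← h1 b, Subsingleton.elim (e.inv a) (e.inv b)]⟩
  · intro h
    exact ⟨fun a b => by rw [← h2 a, ← h2 b, Subsingleton.elim (e.hom a) (e.hom b)]⟩

lemma subsingleton_of_isZero {X : ModuleCat.{0} R} (h : Limits.IsZero X) : Subsingleton X := by
  have h1 : (𝟙 X : X ⟶ X) = 0 := h.eq_of_src _ _
  refine ⟨fun a b => ?_⟩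
  have hz : ∀ x : (X : Type), x = 0 := fun x => by
    have : (𝟙 X : X ⟶ X) x = (0 : X ⟶ X) x := by rw [h1]
    simpa using this
  rw [hz a, hz b]

lemma ext_subsingleton_iff (Y : ModuleCat.{0} R) (m : ℕ) :
    Subsingleton (((Ext R (ModuleCat.{0} R) (m+1)).obj (Opposite.op (ModuleCat.of R N))).obj Y)
      ↔ ∀ φ : (Fin ((t (m+1)).b) → R) →ₗ[R] Y, φ.comp (dres R N (m+1)) = 0 →
          ∃ ψ : (Fin ((t m).b) → R) →ₗ[R] Y, ψ.comp (dres R N m) = φ := by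
  rw [subsingleton_iff_of_iso R ((resPR R N).isoExt (m+1) Y)]
  change Subsingleton (((resC R N).linearYonedaObj R Y).homology (m+1)) ↔ _
  have hzero : Subsingleton (((resC R N).linearYonedaObj R Y).homology (m+1)) ↔
      Limits.IsZero (((resC R N).linearYonedaObj R Y).homology (m+1)) :=
    ⟨fun h => ModuleCat.isZero_of_subsingleton _, fun h => subsingleton_of_isZero R h⟩
  rw [hzero, ← HomologicalComplex.exactAt_iff_isZero_homology,
    HomologicalComplex.exactAt_iff' _ m (m+1) (m+2) (by simp) (by simp),
    ShortComplex.moduleCat_exact_iff]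
  constructor
  · intro h φ hφ
    have hgφ : (((resC R N).linearYonedaObj R Y).sc' m (m+1) (m+2)).g (ModuleCat.ofHom φ) = 0 := by
      show (((resC R N).linearYonedaObj R Y).d (m+1) (m+2)) (ModuleCat.ofHom φ) = 0
      show (resC R N).d (m+2) (m+1) ≫ ModuleCat.ofHom φ = 0
      rw [show (resC R N).d (m+2) (m+1) = (ModuleCat.ofHom (dres R N (m+1))) from resC_d R N (m+1)]
      exact ModuleCat.hom_ext hφ
    obtain ⟨ψ, hψ⟩ := h (ModuleCat.ofHom φ) hgφ
    refine ⟨ψ.hom, ?_⟩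
    have : (resC R N).d (m+1) m ≫ ψ = ModuleCat.ofHom φ := hψ
    rw [show (resC R N).d (m+1) m = (ModuleCat.ofHom (dres R N m)) from resC_d R N m] at this
    exact congrArg ModuleCat.Hom.hom this
  · intro h φ hφ
    have hφ' : (φ.hom : (Fin ((t (m+1)).b) → R) →ₗ[R] Y).comp (dres R N (m+1)) = 0 := by
      have : (resC R N).d (m+2) (m+1) ≫ φ = 0 := hφ
      rw [show (resC R N).d (m+2) (m+1) = (ModuleCat.ofHom (dres R N (m+1))) from resC_d R N (m+1)] at this
      exact congrArg ModuleCat.Hom.hom this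
    obtain ⟨ψ, hψ⟩ := h φ.hom hφ'
    refine ⟨ModuleCat.ofHom ψ, ?_⟩
    show (resC R N).d (m+1) m ≫ ModuleCat.ofHom ψ = φ
    rw [show (resC R N).d (m+1) m = (ModuleCat.ofHom (dres R N m)) from resC_d R N m]
    exact ModuleCat.hom_ext hψ

end Res

theorem core_lemma_s5
    (R : Type) [CommRing R] [IsLocalRing R]
    (S : Type) [CommRing S] [IsNoetherianRing S] [Algebra R S]
    (M : Type) [AddCommGroup M] [Module R M] [Module S M] [IsScalarTower R S M]
    [Module.Finite S M]
    (D Mi : Submodule S M)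
    (hlow : ∀ r ∈ maximalIdeal R, ∀ u ∈ D, r • u ∈ Mi)
    (hhigh : Mi ≤ (⊥ : Ideal S).jacobson • D)
    (hfaithful : ∀ r : R, (∀ x : M, x ∈ D → r • x = 0) → r = 0)
    {b : ℕ} (Ω : Submodule R (Fin b → R))
    (hΩm : ∀ ω ∈ Ω, ∀ j, ω j ∈ maximalIdeal R)
    (hext : ∀ χ : Ω →ₗ[R] ↥Mi, ∃ ψ : (Fin b → R) →ₗ[R] ↥Mi,
      ∀ ω : Ω, ψ (ω : Fin b → R) = χ ω) :
    Ω = ⊥ := by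
  classical
  set J : Ideal S := (⊥ : Ideal S).jacobson with hJ
  set I : Ideal R := Ideal.span {r | ∃ ω ∈ Ω, ∃ j, ω j = r} with hI
  set IS : Ideal S := I.map (algebraMap R S) with hIS
  set T : Submodule S M := IS • D with hT
  -- Step 1 : generators of I move D into IS • Mi
  have step1 : ∀ a, (∃ ω ∈ Ω, ∃ j, ω j = a) → ∀ u ∈ D, a • u ∈ (IS • Mi : Submodule S M) := by
    rintro a ⟨ω, hω, j, rfl⟩ u hu
    -- the linear map χ : Ω → Mi
    let χ : Ω →ₗ[R] ↥Mi :=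
      { toFun := fun ω' => ⟨(ω' : Fin b → R) j • u, hlow _ (hΩm _ ω'.2 j) u hu⟩
        map_add' := by
          intro y z
          ext
          simp [add_smul]
        map_smul' := by
          intro r y
          ext
          simp [mul_smul] }
    obtain ⟨ψ, hψ⟩ := hext χ
    have hval : (ω j) • u = ((ψ ω : ↥Mi) : M) := by
      have := hψ ⟨ω, hω⟩
      have h2 : ((χ ⟨ω, hω⟩ : ↥Mi) : M) = (ω j) • u := rfl
      rw [← h2, ← this]
    rw [hval]
    -- expand ψ ω over the standard basis
    have hexp : ω = ∑ j', ω j' • (fun j'' => if j' = j'' then (1:R) else 0) :=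
      pi_eq_sum_univ ω
    have : (ψ ω : M) = ∑ j', ω j' • ((ψ fun j'' => if j' = j'' then (1:R) else 0 : ↥Mi) : M) := by
      conv_lhs => rw [hexp]
      rw [map_sum]
      push_cast
      refine Finset.sum_congr rfl fun j' _ => ?_
      rw [map_smul]
      rfl
    rw [this]
    refine Submodule.sum_mem _ fun j' _ => ?_
    have hmem : ω j' ∈ I := Ideal.subset_span ⟨ω, hω, j', rfl⟩
    have : ω j' • ((ψ fun j'' => if j' = j'' then (1:R) else 0 : ↥Mi) : M)
        = algebraMap R S (ω j') • ((ψ fun j'' => if j' = j'' then (1:R) else 0 : ↥Mi) : M) :=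
      (algebraMap_smul S _ _).symm
    rw [this]
    exact Submodule.smul_mem_smul (Ideal.mem_map_of_mem _ hmem) (ψ _).2
  -- Step 1' : all of I
  have step1' : ∀ a ∈ I, ∀ u ∈ D, a • u ∈ (IS • Mi : Submodule S M) := by
    intro a ha u hu
    induction ha using Submodule.span_induction with
    | mem a ha => exact step1 a ha u hu
    | zero => simpa using Submodule.zero_mem _
    | add a a' _ _ iha iha' => rw [add_smul]; exact Submodule.add_mem _ iha iha'
    | smul r a _ iha =>
        rw [smul_eq_mul, mul_smul]
        exact Submodule.smul_of_tower_mem _ r iha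
  -- Step 2 : T ≤ J • T
  have hISMi : (IS • Mi : Submodule S M) ≤ J • T := by
    calc IS • Mi ≤ IS • (J • D) := Submodule.smul_mono le_rfl hhigh
      _ = (IS • J) • D := (Submodule.smul_assoc _ _ _).symm
      _ = (J • IS) • D := by rw [smul_eq_mul, smul_eq_mul, mul_comm]
      _ = J • T := Submodule.smul_assoc _ _ _
  have step2 : T ≤ J • T := by
    intro x hx
    refine Submodule.smul_induction_on hx ?_ ?_
    · intro s hs u hu
      induction hs using Submodule.span_induction with
      | mem s hs =>
          obtain ⟨a, ha, rfl⟩ := hs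
          have : algebraMap R S a • u = a • u := algebraMap_smul S a u
          rw [this]
          exact hISMi (step1' a ha u hu)
      | zero => simpa using Submodule.zero_mem _
      | add s s' _ _ ih ih' => rw [add_smul]; exact Submodule.add_mem _ ih ih'
      | smul s' s _ ih =>
          rw [smul_eq_mul, mul_smul]
          exact Submodule.smul_mem _ s' ih
    · intro y z hy hz
      exact Submodule.add_mem _ hy hz
  -- Step 3 : Nakayama
  have hTfg : T.FG := (isNoetherian_def.mp inferInstance) T
  have hTbot : T = ⊥ :=
    Submodule.eq_bot_of_le_smul_of_le_jacobson_bot J T hTfg step2 le_rfl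
  -- Step 4 : coordinates vanish
  have hIzero : ∀ a, (∃ ω ∈ Ω, ∃ j, ω j = a) → a = 0 := by
    intro a ha
    refine hfaithful a fun x hx => ?_
    have hmem : a • x ∈ T := by
      have : a • x = algebraMap R S a • x := (algebraMap_smul S a x).symm
      rw [this]
      exact Submodule.smul_mem_smul (Ideal.mem_map_of_mem _ (Ideal.subset_span ha)) hx
    rw [hTbot] at hmem
    simpa using hmem
  rw [eq_bot_iff]
  intro ω hω
  have : ∀ j, ω j = 0 := fun j => hIzero (ω j) ⟨ω, hω, j, rfl⟩
  simp only [Submodule.mem_bot]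
  funext j
  exact this j

theorem pd_le_of_ext_vanishing_faithful
    (R : Type) [CommRing R] [IsNoetherianRing R] [IsLocalRing R]
    (S : Type) [CommRing S] [IsNoetherianRing S] [Algebra R S]
    (hmS : (maximalIdeal R).map (algebraMap R S) ≤ (⊥ : Ideal S).jacobson)
    (M : Type) [AddCommGroup M] [Module R M] [Module S M] [IsScalarTower R S M]
    [Nontrivial M] [Module.Finite S M]
    (t : ℕ) (ht : 1 ≤ t)
    (Mfil : ℕ → Submodule S M)
    (hM0 : Mfil 0 = ⊤)
    (hlow : ∀ i, 1 ≤ i → i ≤ t →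
      maximalIdeal R • (Mfil (i - 1)).restrictScalars R ≤ (Mfil i).restrictScalars R)
    (hhigh : ∀ i, 1 ≤ i → i ≤ t → Mfil i ≤ (⊥ : Ideal S).jacobson • Mfil (i - 1))
    (N : Type) [AddCommGroup N] [Module R N] [Module.Finite R N]
    (n : ℕ) (hn : 1 ≤ n) (i : ℕ) (hi1 : 1 ≤ i) (hit : i ≤ t)
    (hvanish : Subsingleton
      (((Ext R (ModuleCat.{0} R) n).obj (Opposite.op (ModuleCat.of R N))).obj
        (ModuleCat.of R ↥(Mfil i))))
    (hfaithful : ∀ r : R, (∀ x : ↥(Mfil (i - 1)), r • x = 0) → r = 0) :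
    HasPdLE R N (n - 1) := by
  classical
  obtain ⟨m, rfl⟩ : ∃ m, n = m + 1 := ⟨n - 1, by omega⟩
  -- the (m+1)-st minimal syzygy
  set Ω : Submodule R (Fin ((towerSeq R N m).b) → R) :=
    LinearMap.ker ((towerSeq R N m).p) with hΩdef
  -- the extension property from the vanishing of Ext
  have hextprop := (ext_subsingleton_iff R N (ModuleCat.of R ↥(Mfil i)) m).mp hvanish
  have hext : ∀ χ : Ω →ₗ[R] ↥(Mfil i), ∃ ψ : (Fin ((towerSeq R N m).b) → R) →ₗ[R] ↥(Mfil i),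
      ∀ ω : Ω, ψ (ω : Fin ((towerSeq R N m).b) → R) = χ ω := by
    intro χ
    set q : (Fin ((towerSeq R N (m+1)).b) → R) →ₗ[R] ↥Ω := (towerSeq R N (m+1)).p with hq
    have hφcoc : (χ.comp q).comp (dres R N (m+1)) = 0 := by
      refine LinearMap.ext fun x => ?_
      show χ (q ((LinearMap.ker q).subtype ((towerSeq R N (m+2)).p x))) = 0
      rw [show q ((LinearMap.ker q).subtype ((towerSeq R N (m+2)).p x)) = 0 from
        LinearMap.congr_fun (LinearMap.comp_ker_subtype q) _]
      simp
    obtain ⟨ψ, hψ⟩ := hextprop (χ.comp q) hφcoc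
    refine ⟨ψ, fun ω => ?_⟩
    obtain ⟨x, hx⟩ := (towerSeq R N (m+1)).surj ω
    have hx' : q x = ω := hx
    have h1 : ψ (dres R N m x) = χ (q x) := LinearMap.congr_fun hψ x
    have h2 : dres R N m x = (ω : Fin ((towerSeq R N m).b) → R) := by
      show Ω.subtype (q x) = _
      rw [hx']
      rfl
    have h3 : ψ ((ω : Fin ((towerSeq R N m).b) → R)) = χ (q x) := h2 ▸ h1
    rw [hx'] at h3
    exact h3
  -- the core commutative-algebra lemma
  have hΩbot : Ω = ⊥ := by
    refine core_lemma_s5 R S M (Mfil (i-1)) (Mfil i) ?_ (hhigh i hi1 hit) ?_ Ω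
      ((towerSeq R N m).ker_le) hext
    · intro r hr u hu
      exact hlow i hi1 hit (Submodule.smul_mem_smul hr hu)
    · intro r h
      refine hfaithful r fun x => ?_
      refine Subtype.ext ?_
      show ((r • x : ↥(Mfil (i-1))) : M) = (0 : M)
      rw [Submodule.coe_smul_of_tower]
      exact h x x.2
  -- conclude
  intro L
  simp only [Nat.add_sub_cancel]
  refine (ext_subsingleton_iff R N L m).mpr ?_
  intro φ hφ
  refine ⟨0, ?_⟩
  have hφ0 : φ = 0 := by
    refine LinearMap.ext fun x => ?_
    have hmem : ((towerSeq R N (m+1)).p x : ↥Ω) = 0 := by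
      have h2 : Ω.subtype ((towerSeq R N (m+1)).p x) ∈ Ω :=
        ((towerSeq R N (m+1)).p x : ↥Ω).2
      have h3 := (le_of_eq hΩbot) h2
      exact Subtype.ext (by simp at h3; exact h3)
    obtain ⟨y, hy⟩ := (towerSeq R N (m+2)).surj ⟨x, hmem⟩
    have h3 : dres R N (m+1) y = x := by
      show (LinearMap.ker ((towerSeq R N (m+1)).p)).subtype ((towerSeq R N (m+2)).p y) = x
      rw [hy]
      rfl
    have h4 : φ (dres R N (m+1) y) = 0 := LinearMap.congr_fun hφ y
    rw [h3] at h4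
    simpa using h4
  rw [hφ0]
  simp
end

section
/- Assume the filtration setup and let F_• be a minimal complex of finitely generated free R-modules with differentials f_n : F_n → F_{n−1}. If H_n(M_i ⊗_R F_•) = 0 for some integer n and some 1 ≤ i ≤ t, then the induced map id_{M_{i-1}} ⊗ f_{n+1} : M_{i-1} ⊗_R F_{n+1} → M_{i-1} ⊗_R F_n is the zero map; if moreover some element of m is a non-zero-divisor on M, then H_n(M_{i-1} ⊗_R F_•) = 0. -/
open TensorProduct LinearMap

section helpers
variable {R : Type} [CommRing R] (I : Ideal R)
  (F G : Type) [AddCommGroup F] [Module R F] [AddCommGroup G] [Module R G]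

noncomputable def mulMapAux : (↥I ⊗[R] F) →ₗ[R] F :=
  (TensorProduct.lid R F).toLinearMap ∘ₗ rTensor F I.subtype

lemma mulMapAux_tmul (a : ↥I) (x : F) : mulMapAux I F (a ⊗ₜ x) = (a : R) • x := by
  simp [mulMapAux]

lemma mulMapAux_inj [Module.Flat R F] : Function.Injective (mulMapAux I F) := by
  apply Function.Injective.comp (TensorProduct.lid R F).injective
  exact Module.Flat.rTensor_preserves_injective_linearMap I.subtype I.injective_subtype

lemma le_range_mulMapAux : I • (⊤ : Submodule R F) ≤ LinearMap.range (mulMapAux I F) := by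
  refine Submodule.smul_le.2 fun r hr x _ => ⟨(⟨r, hr⟩ : ↥I) ⊗ₜ x, by simp [mulMapAux_tmul]⟩

lemma mulMapAux_natural (h : F →ₗ[R] G) :
    h ∘ₗ mulMapAux I F = mulMapAux I G ∘ₗ lTensor ↥I h := by
  apply TensorProduct.ext'
  intro a x
  simp [mulMapAux_tmul, map_smul]

end helpers

section fin
variable {R S : Type} [CommRing R] [CommRing S] [Algebra R S]

lemma finite_tensor (N : Type) [AddCommGroup N] [Module R N] [Module S N]
    [IsScalarTower R S N] [Module.Finite S N]
    (F : Type) [AddCommGroup F] [Module R F] [Module.Finite R F] :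
    Module.Finite S (N ⊗[R] F) := by
  obtain ⟨k, π, hπ⟩ := Module.Finite.exists_fin' R F
  have h1 : Module.Finite S (N ⊗[R] (Fin k → R)) :=
    Module.Finite.equiv (TensorProduct.piScalarRight R S N (Fin k)).symm
  refine Module.Finite.of_surjective
    (AlgebraTensorModule.map (LinearMap.id : N →ₗ[S] N) π) ?_
  intro z
  induction z using TensorProduct.induction_on with
  | zero => exact ⟨0, map_zero _⟩
  | tmul n x =>
      obtain ⟨y, hy⟩ := hπ x
      exact ⟨n ⊗ₜ y, by simp [hy]⟩
  | add a b ha hb =>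
      obtain ⟨u, hu⟩ := ha
      obtain ⟨v, hv⟩ := hb
      exact ⟨u + v, by simp [hu, hv]⟩

end fin

section core
variable {R S M : Type} [CommRing R] [CommRing S] [Algebra R S]
  [AddCommGroup M] [Module R M] [Module S M] [IsScalarTower R S M]
  {I : Ideal R} {A B : Submodule S M}
  {F₁ F₂ F₃ : Type} [AddCommGroup F₁] [AddCommGroup F₂] [AddCommGroup F₃]
  [Module R F₁] [Module R F₂] [Module R F₃]

/-- inclusion `A → B` as an `R`-linear map -/
def inclRAux (hAB : A ≤ B) : ↥A →ₗ[R] ↥B where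
  toFun a := ⟨a, hAB a.2⟩
  map_add' _ _ := rfl
  map_smul' _ _ := rfl

/-- the bilinear "contraction" `B → I → A` -/
def phiAux (hIBA : ∀ r ∈ I, ∀ b ∈ B, r • b ∈ A) : ↥B →ₗ[R] ↥I →ₗ[R] ↥A where
  toFun b :=
    { toFun := fun a => ⟨(a : R) • (b : M), hIBA a a.2 b b.2⟩
      map_add' := fun a a' => by ext; simp [add_smul]
      map_smul' := fun r a => by ext; simp [mul_smul] }
  map_add' b b' := by ext a; simp
  map_smul' r b := by
    ext a
    simp [smul_comm ((a : R)) r]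

theorem core_one
    (hAB : A ≤ B) (hIBA : ∀ r ∈ I, ∀ b ∈ B, r • b ∈ A)
    (hAJB : A ≤ (⊥ : Ideal S).jacobson • B)
    (hBfg : Module.Finite S ↥B)
    [Module.Projective R F₁] [Module.Finite R F₁] [Module.Flat R F₃]
    (f : F₁ →ₗ[R] F₂) (g : F₂ →ₗ[R] F₃)
    (hf : LinearMap.range f ≤ I • (⊤ : Submodule R F₂))
    (hgf : g ∘ₗ f = 0)
    (hexact : ∀ x : ↥A ⊗[R] F₂, lTensor ↥A g x = 0 → ∃ y : ↥A ⊗[R] F₁, lTensor ↥A f y = x) :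
    lTensor ↥B f = 0 := by
  classical
  set J := (⊥ : Ideal S).jacobson with hJ
  -- Step 1: factor f through I ⊗ F₂
  obtain ⟨g', hg'⟩ : ∃ g' : F₁ →ₗ[R] ↥I ⊗[R] F₂, mulMapAux I F₂ ∘ₗ g' = f := by
    have hcod : ∀ x : F₁, f x ∈ LinearMap.range (mulMapAux I F₂) :=
      fun x => le_range_mulMapAux I F₂ (hf (LinearMap.mem_range_self f x))
    obtain ⟨h, hh⟩ := Module.projective_lifting_property
      ((mulMapAux I F₂).rangeRestrict)
      (LinearMap.codRestrict (LinearMap.range (mulMapAux I F₂)) f hcod)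
      (LinearMap.surjective_rangeRestrict _)
    refine ⟨h, ?_⟩
    ext x
    have := congrArg (fun (u : ↥(LinearMap.range (mulMapAux I F₂))) => (u : F₂))
      (LinearMap.congr_fun hh x)
    simpa using this
  let φ := phiAux (R := R) hIBA
  let Ψ₂ : ↥B ⊗[R] (↥I ⊗[R] F₂) →ₗ[R] ↥A ⊗[R] F₂ :=
    TensorProduct.lift ((rTensorHom F₂) ∘ₗ φ)
  let Ψ₃ : ↥B ⊗[R] (↥I ⊗[R] F₃) →ₗ[R] ↥A ⊗[R] F₃ :=
    TensorProduct.lift ((rTensorHom F₃) ∘ₗ φ)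
  have hΨ₂ : ∀ (b : ↥B) (a : ↥I) (x : F₂), Ψ₂ (b ⊗ₜ (a ⊗ₜ x)) = (φ b a) ⊗ₜ x := by
    intro b a x; simp [Ψ₂]
  have hΨ₃ : ∀ (b : ↥B) (a : ↥I) (x : F₃), Ψ₃ (b ⊗ₜ (a ⊗ₜ x)) = (φ b a) ⊗ₜ x := by
    intro b a x; simp [Ψ₃]
  let D : ↥B ⊗[R] F₁ →ₗ[R] ↥A ⊗[R] F₂ := Ψ₂ ∘ₗ lTensor ↥B g'
  let ι₂ : ↥A ⊗[R] F₂ →ₗ[R] ↥B ⊗[R] F₂ := rTensor F₂ (inclRAux (R := R) hAB)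
  let jmap : ↥A ⊗[R] F₁ →ₗ[R] ↥B ⊗[R] F₁ := rTensor F₁ (inclRAux (R := R) hAB)
  -- Claim a
  have claimA : ι₂ ∘ₗ D = lTensor ↥B f := by
    apply TensorProduct.ext'
    intro b x
    have key : ∀ w : ↥I ⊗[R] F₂, ι₂ (Ψ₂ (b ⊗ₜ w)) = b ⊗ₜ (mulMapAux I F₂ w) := by
      intro w
      induction w using TensorProduct.induction_on with
      | zero => simp
      | tmul a y =>
          rw [hΨ₂, mulMapAux_tmul]
          have h1 : ι₂ ((φ b a) ⊗ₜ y) = (inclRAux (R := R) hAB (φ b a)) ⊗ₜ y := by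
            simp [ι₂]
          rw [h1]
          have h2 : inclRAux (R := R) hAB (φ b a) = (a : R) • b := by
            apply Subtype.ext
            rfl
          rw [h2, TensorProduct.smul_tmul]
      | add w₁ w₂ h₁ h₂ =>
          rw [tmul_add, map_add, map_add, h₁, h₂, map_add, tmul_add]
    calc ι₂ (D (b ⊗ₜ x)) = ι₂ (Ψ₂ (b ⊗ₜ g' x)) := by simp [D]
    _ = b ⊗ₜ (mulMapAux I F₂ (g' x)) := key _
    _ = b ⊗ₜ f x := by rw [← hg']; rfl
    _ = lTensor ↥B f (b ⊗ₜ x) := by simp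
  -- Claim b
  have claimB : ∀ z : ↥B ⊗[R] F₁, lTensor ↥A g (D z) = 0 := by
    have hcomp : lTensor ↥A g ∘ₗ D = 0 := by
      apply TensorProduct.ext'
      intro b x
      have key : ∀ w : ↥I ⊗[R] F₂,
          lTensor ↥A g (Ψ₂ (b ⊗ₜ w)) = Ψ₃ (b ⊗ₜ (lTensor ↥I g w)) := by
        intro w
        induction w using TensorProduct.induction_on with
        | zero => simp
        | tmul a y => rw [hΨ₂]; simp [hΨ₃]
        | add w₁ w₂ h₁ h₂ =>
            rw [tmul_add, map_add, map_add, h₁, h₂, map_add, tmul_add, map_add]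
      have hzero : lTensor ↥I g (g' x) = 0 := by
        apply mulMapAux_inj I F₃
        have h := LinearMap.congr_fun (mulMapAux_natural I F₂ F₃ g) (g' x)
        simp only [LinearMap.comp_apply] at h
        rw [← h, show mulMapAux I F₂ (g' x) = f x from LinearMap.congr_fun hg' x,
          show g (f x) = 0 from LinearMap.congr_fun hgf x, map_zero]
      simp only [LinearMap.comp_apply, LinearMap.zero_apply]
      calc lTensor ↥A g (D (b ⊗ₜ x)) = lTensor ↥A g (Ψ₂ (b ⊗ₜ g' x)) := by simp [D]
      _ = Ψ₃ (b ⊗ₜ (lTensor ↥I g (g' x))) := key _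
      _ = 0 := by rw [hzero, tmul_zero, map_zero]
    intro z
    exact LinearMap.congr_fun hcomp z
  -- commuting square
  have hsquare : ι₂ ∘ₗ lTensor ↥A f = lTensor ↥B f ∘ₗ jmap := by
    simp only [ι₂, jmap, lTensor_comp_rTensor, rTensor_comp_lTensor]
  -- S-linear differential
  let dS : ↥B ⊗[R] F₁ →ₗ[S] ↥B ⊗[R] F₂ :=
    AlgebraTensorModule.map (LinearMap.id : ↥B →ₗ[S] ↥B) f
  have hdS : ∀ z : ↥B ⊗[R] F₁, dS z = lTensor ↥B f z := by
    intro z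
    induction z using TensorProduct.induction_on with
    | zero => simp
    | tmul b x => simp [dS]
    | add a b ha hb => rw [map_add, map_add, ha, hb]
  have hfin : Module.Finite S (↥B ⊗[R] F₁) := finite_tensor ↥B F₁
  -- jmap lands in J • ⊤
  have hjmem : ∀ w : ↥A ⊗[R] F₁, jmap w ∈ J • (⊤ : Submodule S (↥B ⊗[R] F₁)) := by
    intro w
    induction w using TensorProduct.induction_on with
    | zero => simp
    | tmul a x =>
        have key : ∀ m ∈ J • B, ∃ hB : m ∈ B,
            (⟨m, hB⟩ : ↥B) ⊗ₜ[R] x ∈ J • (⊤ : Submodule S (↥B ⊗[R] F₁)) := by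
          intro m hm
          refine Submodule.smul_induction_on hm ?_ ?_
          · intro s hs b hb
            refine ⟨Submodule.smul_mem B s hb, ?_⟩
            have : (⟨s • b, Submodule.smul_mem B s hb⟩ : ↥B) = s • (⟨b, hb⟩ : ↥B) := rfl
            rw [this, ← TensorProduct.smul_tmul']
            exact Submodule.smul_mem_smul hs trivial
          · rintro m₁ m₂ ⟨h₁, hm₁⟩ ⟨h₂, hm₂⟩
            refine ⟨Submodule.add_mem B h₁ h₂, ?_⟩
            have : (⟨m₁ + m₂, Submodule.add_mem B h₁ h₂⟩ : ↥B)
                = (⟨m₁, h₁⟩ : ↥B) + ⟨m₂, h₂⟩ := rfl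
            rw [this, TensorProduct.add_tmul]
            exact Submodule.add_mem _ hm₁ hm₂
        obtain ⟨hB, hmem⟩ := key (a : M) (hAJB a.2)
        have : jmap ((a : ↥A) ⊗ₜ x) = (⟨(a : M), hB⟩ : ↥B) ⊗ₜ x := by
          simp only [jmap, rTensor_tmul]
          rfl
        rw [this]
        exact hmem
    | add w₁ w₂ h₁ h₂ =>
        rw [map_add]
        exact Submodule.add_mem _ h₁ h₂
  -- Nakayama
  have hN : LinearMap.range dS ≤ J • LinearMap.range dS := by
    rintro _ ⟨z, rfl⟩
    obtain ⟨w, hw⟩ := hexact (D z) (claimB z)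
    have h1 : dS z = dS (jmap w) := by
      rw [hdS, hdS, ← LinearMap.congr_fun claimA z]
      simp only [LinearMap.comp_apply]
      rw [← hw, ← LinearMap.comp_apply, hsquare]
      rfl
    rw [h1]
    have : dS (jmap w) ∈ Submodule.map dS (J • (⊤ : Submodule S (↥B ⊗[R] F₁))) :=
      Submodule.mem_map_of_mem (hjmem w)
    rwa [Submodule.map_smul'', Submodule.map_top] at this
  have hfg : (LinearMap.range dS).FG := by
    have : (⊤ : Submodule S (↥B ⊗[R] F₁)).FG := Module.finite_def.mp hfin
    have h2 := Submodule.FG.map dS this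
    rwa [Submodule.map_top] at h2
  have hbot : LinearMap.range dS = ⊥ :=
    Submodule.eq_bot_of_le_smul_of_le_jacobson_bot J _ hfg hN le_rfl
  refine LinearMap.ext fun z => ?_
  rw [LinearMap.zero_apply, ← hdS]
  have h3 : dS z ∈ LinearMap.range dS := LinearMap.mem_range_self _ _
  rw [hbot] at h3
  exact (Submodule.mem_bot S).mp h3

end core

section core2
variable {R S M : Type} [CommRing R] [CommRing S] [Algebra R S]
  [AddCommGroup M] [Module R M] [Module S M] [IsScalarTower R S M]
  {A B : Submodule S M}
  {F₁ F₂ F₃ : Type} [AddCommGroup F₁] [AddCommGroup F₂] [AddCommGroup F₃]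
  [Module R F₁] [Module R F₂] [Module R F₃]

theorem core_two
    (hAB : A ≤ B) (r : R) (hrBA : ∀ b ∈ B, r • b ∈ A)
    (hreg : ∀ x : M, r • x = 0 → x = 0)
    [Module.Flat R F₂]
    (f : F₁ →ₗ[R] F₂) (g : F₂ →ₗ[R] F₃)
    (hexact : ∀ x : ↥A ⊗[R] F₂, lTensor ↥A g x = 0 → ∃ y : ↥A ⊗[R] F₁, lTensor ↥A f y = x)
    (hBf0 : lTensor ↥B f = 0) :
    ∀ z : ↥B ⊗[R] F₂, lTensor ↥B g z = 0 → z = 0 := by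
  intro z hz
  let μ : ↥B →ₗ[R] ↥A :=
    { toFun := fun b => ⟨r • (b : M), hrBA b b.2⟩
      map_add' := fun b b' => by ext; simp
      map_smul' := fun c b => by
        ext
        simp only [SetLike.val_smul_of_tower, RingHom.id_apply]
        rw [smul_comm] }
  have h1 : lTensor ↥A g (rTensor F₂ μ z) = 0 := by
    rw [← LinearMap.comp_apply, lTensor_comp_rTensor, ← rTensor_comp_lTensor,
      LinearMap.comp_apply, hz, map_zero]
  obtain ⟨w, hw⟩ := hexact _ h1
  let ρ : ↥B →ₗ[R] ↥B := r • LinearMap.id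
  have e2 : inclRAux (R := R) hAB ∘ₗ μ = ρ := by
    refine LinearMap.ext fun b => Subtype.ext ?_
    simp [μ, ρ, inclRAux]
  have e3 : ∀ u : ↥B ⊗[R] F₂, rTensor F₂ ρ u = r • u := by
    intro u
    induction u using TensorProduct.induction_on with
    | zero => simp
    | tmul b x =>
        rw [rTensor_tmul]
        show ((r • b) ⊗ₜ[R] x : ↥B ⊗[R] F₂) = r • (b ⊗ₜ x)
        rw [TensorProduct.smul_tmul']
    | add u₁ u₂ hu₁ hu₂ => rw [map_add, hu₁, hu₂, smul_add]
  have e4 : rTensor F₂ (inclRAux (R := R) hAB) (rTensor F₂ μ z) = 0 := by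
    rw [← hw, ← LinearMap.comp_apply, rTensor_comp_lTensor, ← lTensor_comp_rTensor,
      LinearMap.comp_apply, hBf0]
    simp
  have h2 : r • z = 0 := by
    rw [← e3 z, ← e2, LinearMap.rTensor_comp, LinearMap.comp_apply]
    exact e4
  have hρ : Function.Injective ρ := by
    intro b b' h
    have hcoe : r • (b : M) = r • (b' : M) := by
      have := congrArg (Subtype.val) h
      simpa [ρ] using this
    have h0 : r • ((b : M) - (b' : M)) = 0 := by rw [smul_sub, hcoe, sub_self]
    have := hreg _ h0
    exact Subtype.ext (by rwa [sub_eq_zero] at this)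
  have hinj : Function.Injective (rTensor F₂ ρ) :=
    Module.Flat.rTensor_preserves_injective_linearMap ρ hρ
  apply hinj
  rw [e3, h2, map_zero]

end core2

open CategoryTheory CategoryTheory.Limits CategoryTheory.MonoidalCategory IsLocalRing

theorem tensor_differential_zero_of_homology_vanishing
    (R : Type) [CommRing R] [IsNoetherianRing R] [IsLocalRing R]
    (S : Type) [CommRing S] [IsNoetherianRing S] [Algebra R S]
    (hmS : (maximalIdeal R).map (algebraMap R S) ≤ (⊥ : Ideal S).jacobson)
    (M : Type) [AddCommGroup M] [Module R M] [Module S M] [IsScalarTower R S M]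
    [Nontrivial M] [Module.Finite S M]
    (t : ℕ) (ht : 1 ≤ t)
    (Mfil : ℕ → Submodule S M)
    (hM0 : Mfil 0 = ⊤)
    (hlow : ∀ i, 1 ≤ i → i ≤ t →
      maximalIdeal R • (Mfil (i - 1)).restrictScalars R ≤ (Mfil i).restrictScalars R)
    (hhigh : ∀ i, 1 ≤ i → i ≤ t → Mfil i ≤ (⊥ : Ideal S).jacobson • Mfil (i - 1))
    (F : ChainComplex (ModuleCat.{0} R) ℤ)
    (hfree : ∀ n : ℤ, Module.Free R (F.X n))
    (hfg : ∀ n : ℤ, Module.Finite R (F.X n))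
    (hmin : ∀ n : ℤ, LinearMap.range (F.d n (n - 1)).hom ≤
      maximalIdeal R • (⊤ : Submodule R (F.X (n - 1))))
    (n : ℤ) (i : ℕ) (hi1 : 1 ≤ i) (hit : i ≤ t)
    (hvanish : IsZero
      ((((tensorLeft (ModuleCat.of R ↥(Mfil i))).mapHomologicalComplex
          (ComplexShape.down ℤ)).obj F).homology n)) :
    (tensorLeft (ModuleCat.of R ↥(Mfil (i - 1)))).map (F.d (n + 1) n) = 0 ∧
      ((∃ r ∈ maximalIdeal R, ∀ x : M, r • x = 0 → x = 0) →
        IsZero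
          ((((tensorLeft (ModuleCat.of R ↥(Mfil (i - 1)))).mapHomologicalComplex
              (ComplexShape.down ℤ)).obj F).homology n)) := by
  have hAB : Mfil i ≤ Mfil (i - 1) := le_trans (hhigh i hi1 hit) Submodule.smul_le_right
  have hIBA : ∀ r ∈ maximalIdeal R, ∀ b ∈ Mfil (i - 1), r • b ∈ Mfil i := by
    intro r hr b hb
    exact hlow i hi1 hit (Submodule.smul_mem_smul hr hb)
  have hBfg : Module.Finite S ↥(Mfil (i - 1)) :=
    Module.Finite.iff_fg.2 (IsNoetherian.noetherian _)
  haveI := hfree (n + 1); haveI := hfree n; haveI := hfree (n - 1); haveI := hfg (n + 1)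
  have hf := hmin (n + 1)
  rw [show (n + 1 - 1 : ℤ) = n from by ring] at hf
  have hgf : (F.d n (n - 1)).hom ∘ₗ
      (F.d (n + 1) n).hom = 0 := by
    rw [← ModuleCat.hom_comp, F.d_comp_d, ModuleCat.hom_zero]
  have hprev : (ComplexShape.down ℤ).prev n = n + 1 :=
    (ComplexShape.down ℤ).prev_eq' (by simp)
  have hnext : (ComplexShape.down ℤ).next n = n - 1 :=
    (ComplexShape.down ℤ).next_eq' (by simp)
  have hex := (HomologicalComplex.exactAt_iff_isZero_homology _ n).2 hvanish
  rw [HomologicalComplex.exactAt_iff' _ (n + 1) n (n - 1) hprev hnext,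
    ShortComplex.moduleCat_exact_iff] at hex
  have hexact : ∀ x : ↥(Mfil i) ⊗[R] ↥(F.X n),
      lTensor ↥(Mfil i) (F.d n (n - 1)).hom x = 0 →
      ∃ y : ↥(Mfil i) ⊗[R] ↥(F.X (n + 1)),
        lTensor ↥(Mfil i) (F.d (n + 1) n).hom y = x :=
    fun x hx => hex x hx
  have part1 : lTensor ↥(Mfil (i - 1))
      (F.d (n + 1) n).hom = 0 :=
    core_one hAB hIBA (hhigh i hi1 hit) hBfg _ _ hf hgf hexact
  constructor
  · exact ModuleCat.hom_ext part1
  · rintro ⟨r, hr, hreg⟩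
    rw [← HomologicalComplex.exactAt_iff_isZero_homology,
      HomologicalComplex.exactAt_iff' _ (n + 1) n (n - 1) hprev hnext,
      ShortComplex.moduleCat_exact_iff]
    intro x hx
    refine ⟨0, ?_⟩
    have hx0 : x = 0 :=
      core_two hAB r (fun b hb => hIBA r hr b hb) hreg _ _ hexact part1 x hx
    rw [map_zero, hx0]
end

section
/- Let (R, m) be a Noetherian local ring such that m contains a non-zero-divisor of R, and let M be a nonzero finitely generated R-module admitting a filtration of R-submodules M_t ≤ M_{t-1} ≤ ... ≤ M_1 ≤ M_0 = M with each M_i nonzero and m·M_{i-1} ≤ M_i for all i = 1, ..., t. If M is a faithful R-module (its annihilator in R is zero), then M_i is a faithful R-module for every i = 1, ..., t. -/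
open IsLocalRing

theorem faithful_of_faithful_filtration
    (R : Type) [CommRing R] [IsNoetherianRing R] [IsLocalRing R]
    (hnzd : ∃ r ∈ maximalIdeal R, r ∈ nonZeroDivisors R)
    (M : Type) [AddCommGroup M] [Module R M] [Module.Finite R M] [Nontrivial M]
    (t : ℕ) (ht : 1 ≤ t)
    (Mfil : ℕ → Submodule R M)
    (hM0 : Mfil 0 = ⊤)
    (hne : ∀ i ≤ t, Mfil i ≠ ⊥)
    (hmono : ∀ i, 1 ≤ i → i ≤ t → Mfil i ≤ Mfil (i - 1))
    (hlow : ∀ i, 1 ≤ i → i ≤ t → maximalIdeal R • Mfil (i - 1) ≤ Mfil i)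
    (hfaithful : ∀ r : R, (∀ x : M, r • x = 0) → r = 0) :
    ∀ i, 1 ≤ i → i ≤ t → ∀ r : R, (∀ x ∈ Mfil i, r • x = 0) → r = 0 := by
  obtain ⟨s, hsm, hsnzd⟩ := hnzd
  have key : ∀ i, i ≤ t → (maximalIdeal R) ^ i • (⊤ : Submodule R M) ≤ Mfil i := by
    intro i
    induction i with
    | zero => intro _; simp [hM0]
    | succ n ih =>
      intro hn
      have h1 : (maximalIdeal R) ^ (n + 1) • (⊤ : Submodule R M)
          ≤ maximalIdeal R • Mfil n := by
        rw [pow_succ, mul_comm, mul_smul]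
        exact Submodule.smul_mono le_rfl (ih (Nat.le_of_succ_le hn))
      refine h1.trans ?_
      have := hlow (n + 1) (Nat.succ_le_succ (Nat.zero_le n)) hn
      simpa using this
  intro i hi1 hit r hr
  have hsi : s ^ i ∈ (maximalIdeal R) ^ i := Ideal.pow_mem_pow hsm i
  have hrs : ∀ x : M, (r * s ^ i) • x = 0 := by
    intro x
    have hx : s ^ i • x ∈ Mfil i :=
      key i hit (Submodule.smul_mem_smul hsi Submodule.mem_top)
    have := hr _ hx
    rw [mul_smul]
    exact this
  have h0 : r * s ^ i = 0 := hfaithful _ hrs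
  exact (pow_mem hsnzd i).2 r h0
end

section
/- Let (R, m) be a Noetherian local ring such that m contains a non-zero-divisor of R, and let M be a nonzero finitely generated R-module admitting a filtration of R-submodules M_t ≤ M_{t-1} ≤ ... ≤ M_1 ≤ M_0 = M with each M_i nonzero and m·M_{i-1} ≤ M_i for all i = 1, ..., t. If the localization M_p is a free R_p-module for every associated prime p of R, then the localization (M_i)_p is a free R_p-module for every associated prime p of R and every i = 1, ..., t. -/
open IsLocalRing

/-- If `s ∈ S` maps all of `M` into the submodule `N`, then the composite
`N → M → LocalizedModule S M` is a localization of `N` at `S`. -/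
lemma aux_isLocalizedModule (R : Type) [CommRing R] (M : Type) [AddCommGroup M]
    [Module R M] (S : Submonoid R) (N : Submodule R M) (s : R) (hs : s ∈ S)
    (hsN : ∀ x : M, s • x ∈ N) :
    IsLocalizedModule S ((LocalizedModule.mkLinearMap S M).comp N.subtype) := by
  constructor
  · exact IsLocalizedModule.map_units (LocalizedModule.mkLinearMap S M)
  · intro y
    induction y using LocalizedModule.induction_on with
    | h x u =>
      refine ⟨⟨⟨s • x, hsN x⟩, ⟨s, hs⟩ * u⟩, ?_⟩
      simp only [LinearMap.comp_apply, Submodule.subtype_apply,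
        LocalizedModule.mkLinearMap_apply]
      rw [Submonoid.smul_def, Submonoid.coe_mul, LocalizedModule.smul'_mk,
        LocalizedModule.mk_eq]
      refine ⟨1, ?_⟩
      simp only [one_smul, Submonoid.smul_def, OneMemClass.coe_one, mul_smul]
      rw [smul_comm]
  · intro n₁ n₂ h
    simp only [LinearMap.comp_apply, Submodule.subtype_apply,
      LocalizedModule.mkLinearMap_apply] at h
    obtain ⟨c, hc⟩ := IsLocalizedModule.exists_of_eq
      (S := S) (f := LocalizedModule.mkLinearMap S M) h
    exact ⟨c, Subtype.ext hc⟩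

theorem locally_free_on_assPrimes_of_filtration
    (R : Type) [CommRing R] [IsNoetherianRing R] [IsLocalRing R]
    (hnzd : ∃ r ∈ maximalIdeal R, r ∈ nonZeroDivisors R)
    (M : Type) [AddCommGroup M] [Module R M] [Module.Finite R M] [Nontrivial M]
    (t : ℕ) (ht : 1 ≤ t)
    (Mfil : ℕ → Submodule R M)
    (hM0 : Mfil 0 = ⊤)
    (hne : ∀ i ≤ t, Mfil i ≠ ⊥)
    (hmono : ∀ i, 1 ≤ i → i ≤ t → Mfil i ≤ Mfil (i - 1))
    (hlow : ∀ i, 1 ≤ i → i ≤ t → maximalIdeal R • Mfil (i - 1) ≤ Mfil i)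
    (hfreeloc : ∀ (p : Ideal R) [p.IsPrime], p ∈ associatedPrimes R R →
      Module.Free (Localization p.primeCompl) (LocalizedModule p.primeCompl M)) :
    ∀ i, 1 ≤ i → i ≤ t → ∀ (p : Ideal R) [p.IsPrime], p ∈ associatedPrimes R R →
      Module.Free (Localization p.primeCompl) (LocalizedModule p.primeCompl ↥(Mfil i)) := by
  obtain ⟨r, hrm, hrnzd⟩ := hnzd
  -- r^i maps M into Mfil i
  have hpow : ∀ i ≤ t, ∀ x : M, r ^ i • x ∈ Mfil i := by
    intro i
    induction i with
    | zero => intro _ x; simp [hM0]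
    | succ n ih =>
      intro hn x
      have h1 : r ^ n • x ∈ Mfil n := ih (le_trans (Nat.le_succ n) hn) x
      have := hlow (n + 1) (Nat.le_add_left 1 n) hn
      simp only [Nat.add_sub_cancel] at this
      have : r • (r ^ n • x) ∈ Mfil (n + 1) :=
        this (Submodule.smul_mem_smul hrm h1)
      rwa [pow_succ, mul_comm, mul_smul]
  intro i hi1 hit p hp hpass
  -- r ∉ p since p is an associated prime (consists of zerodivisors) and r is a nzd
  have hrp : r ∈ p.primeCompl := by
    intro hrmem
    obtain ⟨hprime, x, hx⟩ := isAssociatedPrime_iff.mp hpass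
    have hxne : x ≠ 0 := by
      rintro rfl
      apply hprime.ne_top
      rw [hx, Ideal.eq_top_iff_one, Submodule.mem_colon_singleton, smul_zero]
      exact Submodule.zero_mem _
    have hmem : r ∈ (⊥ : Submodule R R).colon {x} := hx ▸ SetLike.mem_coe.mp hrmem
    have hrx : r • x = 0 :=
      (Submodule.mem_bot R).mp (Submodule.mem_colon_singleton.mp hmem)
    rw [smul_eq_mul] at hrx
    exact hxne (hrnzd.2 x (by rwa [mul_comm] at hrx))
  have hsp : r ^ i ∈ p.primeCompl := pow_mem hrp i
  -- localized module of Mfil i is isomorphic to that of M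
  have hloc := aux_isLocalizedModule R M p.primeCompl (Mfil i) (r ^ i) hsp (hpow i hit)
  have e : LocalizedModule p.primeCompl ↥(Mfil i) ≃ₗ[R] LocalizedModule p.primeCompl M :=
    @IsLocalizedModule.iso R _ p.primeCompl _ _ _ _ _ _
      ((LocalizedModule.mkLinearMap p.primeCompl M).comp (Mfil i).subtype) hloc
  -- upgrade to a Localization p.primeCompl-linear equiv
  have hbij : Function.Bijective
      (e.toLinearMap.extendScalarsOfIsLocalization p.primeCompl
        (Localization p.primeCompl)) := e.bijective
  have e' := LinearEquiv.ofBijective _ hbij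
  have := hfreeloc p hpass
  exact Module.Free.of_equiv e'.symm
end

section
/- Assume the filtration setup, and assume moreover: M is finitely generated as an R-module via f with Supp_R(M) = Spec(R); some element of m is a non-zero-divisor of R; the localization M_p is a free R_p-module for every associated prime p of R; and each M_i is nonzero. If N is a nonzero finitely generated torsionless R-module and M_i ⊗_R N is a torsion-free R-module for some 1 ≤ i ≤ t, then N is a free R-module and M_i is a torsion-free R-module. -/
open IsLocalRing TensorProduct

set_option maxHeartbeats 1000000
set_option synthInstance.maxHeartbeats 400000

theorem free_of_tensor_torsionFree_with_torsionless
    (R : Type) [CommRing R] [IsNoetherianRing R] [IsLocalRing R]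
    (S : Type) [CommRing S] [IsNoetherianRing S] [Algebra R S]
    (hmS : (maximalIdeal R).map (algebraMap R S) ≤ (⊥ : Ideal S).jacobson)
    (M : Type) [AddCommGroup M] [Module R M] [Module S M] [IsScalarTower R S M]
    [Nontrivial M] [Module.Finite S M] [Module.Finite R M]
    (hsupp : Module.support R M = Set.univ)
    (hnzd : ∃ r ∈ maximalIdeal R, r ∈ nonZeroDivisors R)
    (hfreeloc : ∀ (p : Ideal R) [p.IsPrime], p ∈ associatedPrimes R R →
      Module.Free (Localization p.primeCompl) (LocalizedModule p.primeCompl M))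
    (t : ℕ) (ht : 1 ≤ t)
    (Mfil : ℕ → Submodule S M)
    (hM0 : Mfil 0 = ⊤)
    (hne : ∀ i ≤ t, Mfil i ≠ ⊥)
    (hlow : ∀ i, 1 ≤ i → i ≤ t →
      maximalIdeal R • (Mfil (i - 1)).restrictScalars R ≤ (Mfil i).restrictScalars R)
    (hhigh : ∀ i, 1 ≤ i → i ≤ t → Mfil i ≤ (⊥ : Ideal S).jacobson • Mfil (i - 1))
    (N : Type) [AddCommGroup N] [Module R N] [Module.Finite R N] [Nontrivial N]
    (htorsionless : Function.Injective (Module.Dual.eval R N))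
    (i : ℕ) (hi1 : 1 ≤ i) (hit : i ≤ t)
    (htf : Submodule.torsion R (↥(Mfil i) ⊗[R] N) = ⊥) :
    Module.Free R N ∧ Submodule.torsion R ↥(Mfil i) = ⊥ := by
  classical
  obtain ⟨r, hrm, hrnzd⟩ := hnzd
  -- ## Minimal presentation of N
  have h1 : ¬ Subsingleton ((ResidueField R) ⊗[R] N) := by
    rw [IsLocalRing.subsingleton_tensorProduct]
    exact not_subsingleton N
  haveI h2 : Nontrivial ((ResidueField R) ⊗[R] N) := not_subsingleton_iff_nontrivial.mp h1
  set ι := Module.Free.ChooseBasisIndex (ResidueField R) ((ResidueField R) ⊗[R] N) with hι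
  set b := Module.Free.chooseBasis (ResidueField R) ((ResidueField R) ⊗[R] N) with hb
  have hnon : Nonempty ι := b.index_nonempty
  have hmk := TensorProduct.mk_surjective R N (ResidueField R) Ideal.Quotient.mk_surjective
  choose f hf using fun j => hmk (b j)
  have hspan : Submodule.span R (Set.range f) = ⊤ :=
    IsLocalRing.span_eq_top_of_tmul_eq_basis (f := f) b hf
  set ε : (ι → R) →ₗ[R] N := Fintype.linearCombination R f with hε
  have hsurj : Function.Surjective ε := by
    intro n
    have hn : n ∈ Submodule.span R (Set.range f) := hspan ▸ Submodule.mem_top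
    rw [Submodule.mem_span_range_iff_exists_fun] at hn
    obtain ⟨c, hc⟩ := hn
    exact ⟨c, by simpa [hε, Fintype.linearCombination_apply] using hc⟩
  have hker : ∀ κ ∈ LinearMap.ker ε, ∀ j, κ j ∈ maximalIdeal R := by
    intro κ hκ j
    have h0 : ∑ j', κ j' • f j' = 0 := by
      simpa [hε, Fintype.linearCombination_apply] using hκ
    have h1' : ∑ j', (algebraMap R (ResidueField R) (κ j')) • b j' = 0 := by
      have := congrArg (TensorProduct.mk R (ResidueField R) N 1) h0
      simp only [algebraMap_smul]
      simpa [map_sum, hf] using this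
    have h3 := congrArg (fun z => b.repr z j) h1'
    simp only [map_sum, map_smul, Module.Basis.repr_self, map_zero] at h3
    have h4 : algebraMap R (ResidueField R) (κ j) = 0 := by
      simpa [Finsupp.finset_sum_apply, Finsupp.smul_apply, Finsupp.single_apply,
        smul_eq_mul, Finset.sum_ite_eq'] using h3
    exact Ideal.Quotient.eq_zero_iff_mem.mp h4
  -- ## Filtration facts
  set A := Mfil (i - 1) with hA
  set B := Mfil i with hB
  have hBA : B ≤ (⊥ : Ideal S).jacobson • A := hhigh i hi1 hit
  have hmAB : ∀ c ∈ maximalIdeal R, ∀ a ∈ A, c • a ∈ B := by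
    intro c hc a ha
    have : c • a ∈ maximalIdeal R • A.restrictScalars R :=
      Submodule.smul_mem_smul hc (by simpa using ha)
    simpa using hlow i hi1 hit this
  have hchain : ∀ n, n ≤ t → ∀ x : M, r ^ n • x ∈ Mfil n := by
    intro n
    induction n with
    | zero => intro _ x; rw [hM0]; exact Submodule.mem_top
    | succ n ih =>
      intro hn x
      have hx := ih (le_trans (Nat.le_succ n) hn) x
      have hs : r • (r ^ n • x) ∈ maximalIdeal R • (Mfil n).restrictScalars R :=
        Submodule.smul_mem_smul hrm (by simpa using hx)
      have := hlow (n + 1) (Nat.succ_le_succ (Nat.zero_le n)) hn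
      simp only [Nat.add_sub_cancel] at this
      have h5 : r • (r ^ n • x) ∈ (Mfil (n + 1)).restrictScalars R := this hs
      simpa [pow_succ, mul_smul, mul_comm] using h5
  -- ## Core vanishing: for a ∈ A, κ ∈ ker ε, all κ j • a = 0
  set SetA : Set (ι → M) := {v | ∃ a ∈ A, ∃ κ ∈ LinearMap.ker ε, v = fun j => κ j • a}
    with hSetA
  set SetB : Set (ι → M) := {v | ∃ bb ∈ B, ∃ κ ∈ LinearMap.ker ε, v = fun j => κ j • bb}
    with hSetB
  set DA := Submodule.span S SetA with hDA
  set DB := Submodule.span S SetB with hDB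
  have hcommRS : ∀ (c : R) (s : S) (x : M), c • s • x = s • c • x := by
    intro c s x
    rw [← algebraMap_smul S c x, ← algebraMap_smul S c (s • x), smul_comm]
  -- the key claim
  have key : ∀ a ∈ A, ∀ κ ∈ LinearMap.ker ε, (fun j => κ j • a) ∈ DB := by
    intro a ha κ hκ
    set bfun : ι → ↥B := fun j => ⟨κ j • a, hmAB (κ j) (hker κ hκ j) a ha⟩ with hbfun
    set u : ↥B ⊗[R] (ι → R) := ∑ j, bfun j ⊗ₜ[R] (Pi.single j (1 : R)) with hu
    set b0 : ↥B := ⟨r • a, hmAB r hrm a ha⟩ with hb0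
    have hεκ : ε κ = 0 := hκ
    have hsum : ∑ j, κ j • (Pi.single j (1 : R) : ι → R) = κ := by
      ext x
      simp [Pi.single_apply, Finset.sum_ite_eq']
    have hrz : r • ((LinearMap.lTensor ↥B ε) u) = 0 := by
      rw [hu, map_sum, Finset.smul_sum]
      have : ∀ j : ι, r • ((LinearMap.lTensor ↥B ε) (bfun j ⊗ₜ[R] Pi.single j 1))
          = b0 ⊗ₜ[R] ε (κ j • (Pi.single j (1 : R) : ι → R)) := by
        intro j
        rw [LinearMap.lTensor_tmul, smul_tmul']
        have hrb : r • bfun j = κ j • b0 := by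
          apply Subtype.ext
          show r • (κ j • a) = κ j • (r • a)
          rw [smul_comm]
        rw [hrb, smul_tmul, ← map_smul]
      rw [Finset.sum_congr rfl (fun j _ => this j), ← tmul_sum, ← map_sum, hsum, hεκ,
        tmul_zero]
    have hz0 : (LinearMap.lTensor ↥B ε) u = 0 := by
      have hmem : (LinearMap.lTensor ↥B ε) u ∈ Submodule.torsion R (↥B ⊗[R] N) :=
        ⟨⟨r, hrnzd⟩, hrz⟩
      rw [htf] at hmem
      simpa using hmem
    have hex := lTensor_exact ↥B (LinearMap.exact_subtype_ker_map ε) hsurj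
    have huR : u ∈ Set.range (LinearMap.lTensor ↥B (Submodule.subtype (LinearMap.ker ε))) :=
      (hex u).mp hz0
    obtain ⟨w, hw⟩ := huR
    -- the evaluation map φ : B ⊗ (ι → R) → (ι → M)
    set φ : ↥B ⊗[R] (ι → R) →ₗ[R] (ι → M) :=
      TensorProduct.lift (LinearMap.mk₂ R (fun (x : ↥B) (v : ι → R) => fun j => v j • (x : M))
        (by intro x y v; funext j; simp [smul_add])
        (by intro c x v; funext j
            show v j • ((c • x : ↥B) : M) = c • (v j • (x : M))
            rw [Submodule.coe_smul_of_tower, smul_comm])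
        (by intro x v v'; funext j; simp [add_smul]
            )
        (by intro c x v; funext j; show (c * v j) • (x : M) = c • (v j • (x : M));
            rw [mul_smul])) with hφ
    have hφtmul : ∀ (x : ↥B) (v : ι → R), φ (x ⊗ₜ[R] v) = fun j => v j • (x : M) := by
      intro x v; rfl
    have hφu : φ u = fun j => κ j • a := by
      rw [hu, map_sum]
      funext x
      rw [Finset.sum_apply]
      have hterm : ∀ j : ι, (φ (bfun j ⊗ₜ[R] (Pi.single j (1:R) : ι → R))) x
          = (Pi.single j (1:R) : ι → R) x • (κ j • a) := by
        intro j; rw [hφtmul]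
      rw [Finset.sum_congr rfl (fun j _ => hterm j)]
      simp [Pi.single_apply, ite_smul, Finset.sum_ite_eq']
    have hφw : ∀ w' : ↥B ⊗[R] ↥(LinearMap.ker ε),
        φ ((LinearMap.lTensor ↥B (Submodule.subtype (LinearMap.ker ε))) w') ∈ DB := by
      intro w'
      induction w' using TensorProduct.induction_on with
      | zero => simp only [map_zero]; exact Submodule.zero_mem _
      | tmul x κ' =>
        rw [LinearMap.lTensor_tmul, hφtmul]
        exact Submodule.subset_span ⟨(x : M), x.2, (κ' : ι → R), κ'.2, rfl⟩
      | add x y hx hy => simp only [map_add]; exact Submodule.add_mem _ hx hy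
    rw [← hφu, ← hw]
    exact hφw w
  -- Nakayama over S
  have stepDA : DA ≤ DB := by
    rw [hDA, Submodule.span_le]
    rintro v ⟨a, ha, κ, hκ, rfl⟩
    exact key a ha κ hκ
  have stepDB : DB ≤ (⊥ : Ideal S).jacobson • DA := by
    rw [hDB, Submodule.span_le]
    rintro v ⟨x, hx, κ, hκ, rfl⟩
    have hx' : x ∈ (⊥ : Ideal S).jacobson • A := hBA hx
    refine Submodule.smul_induction_on hx' ?_ ?_
    · intro s hs a ha
      have : (fun j => κ j • (s • a)) = s • (fun j => κ j • a) := by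
        funext j
        show κ j • s • a = s • κ j • a
        exact hcommRS (κ j) s a
      rw [this]
      exact Submodule.smul_mem_smul hs (Submodule.subset_span ⟨a, ha, κ, hκ, rfl⟩)
    · intro x y hxm hym
      have : (fun j => κ j • (x + y)) = (fun j => κ j • x) + fun j => κ j • y := by
        funext j; simp [smul_add]
      rw [this]
      exact Submodule.add_mem _ hxm hym
  haveI : IsNoetherian S M := isNoetherian_of_isNoetherianRing_of_finite S M
  have hDA0 : DA = ⊥ :=
    Submodule.eq_bot_of_le_smul_of_le_jacobson_bot ((⊥ : Ideal S).jacobson) DA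
      (IsNoetherian.noetherian DA) (le_trans stepDA stepDB) le_rfl
  have hAK0 : ∀ a ∈ A, ∀ κ ∈ LinearMap.ker ε, ∀ j, κ j • a = (0 : M) := by
    intro a ha κ hκ j
    have : (fun j => κ j • a) ∈ DA := Submodule.subset_span ⟨a, ha, κ, hκ, rfl⟩
    rw [hDA0] at this
    have h0 : (fun j => κ j • a) = (0 : ι → M) := by simpa using this
    exact congrFun h0 j
  -- ## each κ j = 0
  have hq0 : ∀ κ ∈ LinearMap.ker ε, ∀ j, κ j = 0 := by
    intro κ hκ j
    by_contra hq
    obtain ⟨p, hp, hannle⟩ := exists_le_isAssociatedPrime_of_isNoetherianRing R (κ j) hq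
    haveI hpprime : p.IsPrime := hp.1
    haveI hfree : Module.Free (Localization p.primeCompl) (LocalizedModule p.primeCompl M) :=
      hfreeloc p hp
    have hr_notp : r ∉ p := by
      obtain ⟨hpr, x, hx⟩ := (Submodule.isAssociatedPrime_iff (N := ⊥)).mp hp
      intro hrp
      have hxne : x ≠ 0 := by
        rintro rfl
        exact hpr.ne_top (by rw [hx]; ext; simp [Submodule.mem_colon_singleton])
      rw [hx, Submodule.mem_colon_singleton, Submodule.mem_bot] at hrp
      have hxr : x * r = 0 := by rw [smul_eq_mul] at hrp; linear_combination hrp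
      exact hxne ((mem_nonZeroDivisors_iff.mp hrnzd).2 x hxr)
    set u := κ j * r ^ (i - 1) with hudef
    have huM : ∀ x : M, u • x = 0 := by
      intro x
      rw [hudef, mul_smul]
      exact hAK0 _ (hchain (i - 1) (le_trans (Nat.sub_le i 1) hit) x) κ hκ j
    haveI hMp : Nontrivial (LocalizedModule p.primeCompl M) := by
      have : (⟨p, hpprime⟩ : PrimeSpectrum R) ∈ Module.support R M := by
        rw [hsupp]; trivial
      exact this
    set bb := Module.Free.chooseBasis (Localization p.primeCompl)
      (LocalizedModule p.primeCompl M) with hbb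
    obtain ⟨idx⟩ := bb.index_nonempty
    have hu0 : ∀ z : LocalizedModule p.primeCompl M, u • z = 0 := by
      intro z
      induction z using LocalizedModule.induction_on with
      | h x s => rw [LocalizedModule.smul'_mk, huM, LocalizedModule.zero_mk]
    have h1' : (algebraMap R (Localization p.primeCompl) u) • bb idx = 0 := by
      rw [algebraMap_smul]; exact hu0 _
    have h2' : algebraMap R (Localization p.primeCompl) u = 0 := by
      have h3 : (algebraMap R (Localization p.primeCompl) u) • (bb.repr (bb idx)) = 0 := by
        rw [← map_smul, h1', map_zero]
      rw [Module.Basis.repr_self] at h3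
      have h4 := congrArg (fun g => g idx) h3
      simp only [Finsupp.smul_apply, Finsupp.single_eq_same, Finsupp.coe_zero, Pi.zero_apply,
        smul_eq_mul, mul_one] at h4
      exact h4
    obtain ⟨⟨s, hs⟩, hsu⟩ := (IsLocalization.map_eq_zero_iff p.primeCompl _ u).mp h2'
    have hsu' : s * (κ j * r ^ (i - 1)) = 0 := by
      have := hsu
      rw [hudef] at this
      exact this
    have hsp : s * r ^ (i - 1) ∈ (⊥ : Submodule R R).colon {κ j} := by
      rw [Submodule.mem_colon_singleton, Submodule.mem_bot, smul_eq_mul]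
      linear_combination hsu'
    have hmemp : s * r ^ (i - 1) ∈ p := hannle hsp
    rcases hpprime.mem_or_mem hmemp with h | h
    · exact hs h
    · exact hr_notp (hpprime.mem_of_pow_mem _ h)
  -- ## conclude
  have hkerbot : LinearMap.ker ε = ⊥ := by
    rw [Submodule.eq_bot_iff]
    intro κ hκ
    funext j
    exact hq0 κ hκ j
  have hbij : Function.Bijective ε := ⟨LinearMap.ker_eq_bot.mp hkerbot, hsurj⟩
  set eN := LinearEquiv.ofBijective ε hbij with heN
  refine ⟨Module.Free.of_equiv eN, ?_⟩
  rw [eq_bot_iff]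
  rintro x ⟨⟨s, hsnzd⟩, hsx⟩
  obtain ⟨idx0⟩ := hnon
  set n0 := ε (Pi.single idx0 (1 : R)) with hn0
  set ztor : ↥(Mfil i) ⊗[R] N := x ⊗ₜ[R] n0 with hztor
  have hzt : ztor ∈ Submodule.torsion R (↥(Mfil i) ⊗[R] N) := by
    refine ⟨⟨s, hsnzd⟩, ?_⟩
    rw [hztor, Submonoid.smul_def, smul_tmul', ← Submonoid.smul_def, hsx, zero_tmul]
  rw [htf] at hzt
  have hz0 : ztor = 0 := by simpa using hzt
  set ψ : ↥(Mfil i) ⊗[R] N →ₗ[R] ↥(Mfil i) :=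
    (TensorProduct.rid R ↥(Mfil i)).toLinearMap ∘ₗ
      LinearMap.lTensor ↥(Mfil i) ((LinearMap.proj idx0) ∘ₗ (eN.symm : N →ₗ[R] (ι → R)))
    with hψ
  have hsymm : eN.symm n0 = Pi.single idx0 (1 : R) := by
    rw [LinearEquiv.symm_apply_eq]
    rfl
  have : ψ ztor = x := by
    rw [hψ, hztor]
    simp only [LinearMap.comp_apply, LinearEquiv.coe_coe, LinearMap.lTensor_tmul,
      LinearMap.coe_comp, Function.comp_apply]
    rw [hsymm]
    simp [Pi.single_eq_same]
  rw [hz0, map_zero] at this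
  simp [← this]
end
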